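/- arXiv:0907.5261 — 3 statements merged into one kernel-verified Lean document; each statement's English description precedes it below -/
import Mathlib

section
/- Let n ≥ 3 and let C ∈ ℤ[X_1,…,X_n] be a cubic form with coefficients of maximum absolute value M ≥ 1. Then there exists a unimodular integer linear change of variables taking C to a cubic form C' with ‖C'‖ ≤ c·M (for an absolute constant c) such that, after possibly replacing C' by -C', the coefficient of X_1^3 in C' is positive and at least c'·M for an absolute constant c' > 0. -/
open MvPolynomial Finset

namespace Stmt1Aux

variable {n : ℕ}

/-- vector supported on three coordinates -/
def vf (i j k : Fin n) (a b c : ℤ) : Fin n → ℤ :=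
  fun t => if t = i then a else if t = j then b else if t = k then c else 0

lemma degree_eq {C : MvPolynomial (Fin n) ℤ} (hC : C.IsHomogeneous 3)
    {d : Fin n →₀ ℕ} (hd : coeff d C ≠ 0) : d.degree = 3 := by
  rw [Finsupp.degree_eq_weight_one]; exact hC hd

/-- the monomial exponent `x_i^(3-p-q) x_j^p x_k^q` -/
noncomputable def mono (i j k : Fin n) (p q : ℕ) : Fin n →₀ ℕ :=
  Finsupp.single i (3 - p - q) + Finsupp.single j p + Finsupp.single k q

lemma mono_apply_j {i j k : Fin n} (hij : i ≠ j) (hjk : j ≠ k) (p q : ℕ) :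
    mono i j k p q j = p := by
  simp [mono, Finsupp.single_apply, hij, hjk.symm]

lemma mono_apply_k {i j k : Fin n} (hik : i ≠ k) (hjk : j ≠ k) (p q : ℕ) :
    mono i j k p q k = q := by
  simp [mono, Finsupp.single_apply, hik, hjk]

/-- Core evaluation lemma: value of a homogeneous cubic at a vector supported on 3 coords. -/
lemma evalE {i j k : Fin n} (hij : i ≠ j) (hik : i ≠ k) (hjk : j ≠ k)
    {C : MvPolynomial (Fin n) ℤ} (hC : C.IsHomogeneous 3) (a b c : ℤ) :
    eval (vf i j k a b c) C =
      ∑ p ∈ range 4, ∑ q ∈ range 4, (if p + q ≤ 3 then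
        coeff (mono i j k p q) C * (a ^ (3 - p - q) * b ^ p * c ^ q) else 0) := by
  classical
  set v := vf i j k a b c with hv
  have hvi : v i = a := by simp [hv, vf]
  have hvj : v j = b := by simp [hv, vf, Ne.symm hij]
  have hvk : v k = c := by simp [hv, vf, Ne.symm hik, Ne.symm hjk]
  have hv0 : ∀ t, t ≠ i → t ≠ j → t ≠ k → v t = 0 := by
    intro t h1 h2 h3; simp [hv, vf, h1, h2, h3]
  set g : (Fin n →₀ ℕ) → ℤ := fun d => coeff d C * ∏ t ∈ d.support, v t ^ d t with hg
  set P : Finset (ℕ × ℕ) := (range 4 ×ˢ range 4).filter (fun pq => pq.1 + pq.2 ≤ 3) with hP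
  set E : Finset (Fin n →₀ ℕ) := P.image (fun pq => mono i j k pq.1 pq.2) with hE
  have hgE : ∀ d ∈ C.support, d ∉ E → g d = 0 := by
    intro d hd hdE
    by_cases hsupp : d.support ⊆ ({i, j, k} : Finset (Fin n))
    · exfalso
      apply hdE
      have h1 : ∑ t ∈ d.support, d t = 3 := degree_eq hC (mem_support_iff.mp hd)
      have h2 : ∑ t ∈ ({i, j, k} : Finset (Fin n)), d t = 3 := by
        rw [← Finset.sum_subset hsupp (fun x _ hx => Finsupp.notMem_support_iff.mp hx)]
        exact h1
      have h3 : d i + (d j + d k) = 3 := by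
        rw [Finset.sum_insert (by simp [hij, hik]), Finset.sum_pair hjk] at h2
        exact h2
      refine mem_image.mpr ⟨(d j, d k), ?_, ?_⟩
      · simp only [hP, mem_filter, mem_product, mem_range]
        omega
      · ext t
        by_cases t1 : t = i
        · subst t1
          simp [mono, Finsupp.single_apply, Ne.symm hij, Ne.symm hik, hij, hik]
          omega
        · by_cases t2 : t = j
          · subst t2; rw [mono_apply_j hij hjk]
          · by_cases t3 : t = k
            · subst t3; rw [mono_apply_k hik hjk]
            · have : t ∉ d.support := fun ht => by
                rcases Finset.mem_insert.mp (hsupp ht) with h | h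
                · exact t1 h
                · rcases Finset.mem_insert.mp h with h' | h'
                  · exact t2 h'
                  · exact t3 (Finset.mem_singleton.mp h')
              rw [Finsupp.notMem_support_iff.mp this]
              simp [mono, Finsupp.single_apply, Ne.symm t1, Ne.symm t2, Ne.symm t3,
                (fun h => t1 h : t = i → False)]
    · obtain ⟨t, ht, ht'⟩ := Finset.not_subset.mp hsupp
      have hvt : v t = 0 := by
        apply hv0 <;> intro h <;> apply ht' <;> simp [h]
      have : ∏ t' ∈ d.support, v t' ^ d t' = 0 := by
        apply Finset.prod_eq_zero ht
        rw [hvt]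
        exact zero_pow (Finsupp.mem_support_iff.mp ht)
      simp [hg, this]
  have hEg : ∀ d ∈ E, d ∉ C.support → g d = 0 := by
    intro d _ hd
    simp [hg, notMem_support_iff.mp hd]
  have step1 : eval v C = ∑ d ∈ C.support, g d := eval_eq v C
  have step2 : ∑ d ∈ C.support, g d = ∑ d ∈ C.support ∪ E, g d :=
    Finset.sum_subset Finset.subset_union_left (fun d hd hd' =>
      hEg d (by rcases Finset.mem_union.mp hd with h | h; exact absurd h hd'; exact h) hd')
  have step3 : ∑ d ∈ E, g d = ∑ d ∈ C.support ∪ E, g d :=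
    Finset.sum_subset Finset.subset_union_right (fun d hd hd' =>
      hgE d (by rcases Finset.mem_union.mp hd with h | h; exact h; exact absurd h hd') hd')
  have hinj : ∀ pq ∈ P, ∀ pq' ∈ P, mono i j k pq.1 pq.2 = mono i j k pq'.1 pq'.2 → pq = pq' := by
    intro pq _ pq' _ heq
    have h1 := congrArg (fun d => d j) heq
    have h2 := congrArg (fun d => d k) heq
    simp only [mono_apply_j hij hjk, mono_apply_k hik hjk] at h1 h2
    exact Prod.ext h1 h2
  have step4 : ∑ d ∈ E, g d = ∑ pq ∈ P, g (mono i j k pq.1 pq.2) := by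
    rw [hE]
    exact Finset.sum_image hinj
  have hgm : ∀ p q : ℕ, g (mono i j k p q)
      = coeff (mono i j k p q) C * (a ^ (3 - p - q) * b ^ p * c ^ q) := by
    intro p q
    have hprod : ∏ t ∈ (mono i j k p q).support, v t ^ (mono i j k p q) t
        = a ^ (3 - p - q) * b ^ p * c ^ q := by
      have : ∏ t ∈ (mono i j k p q).support, v t ^ (mono i j k p q) t
          = (mono i j k p q).prod (fun t m => v t ^ m) := rfl
      rw [this, mono]
      rw [Finsupp.prod_add_index' (fun a => pow_zero _) (fun a b1 b2 => pow_add _ _ _)]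
      rw [Finsupp.prod_add_index' (fun a => pow_zero _) (fun a b1 b2 => pow_add _ _ _)]
      rw [Finsupp.prod_single_index, Finsupp.prod_single_index, Finsupp.prod_single_index,
        hvi, hvj, hvk] <;> exact pow_zero _
    rw [hg]
    simp only [hprod]
  calc eval v C = ∑ d ∈ E, g d := by rw [step1, step2, ← step3]
    _ = ∑ pq ∈ P, g (mono i j k pq.1 pq.2) := step4
    _ = ∑ pq ∈ P, coeff (mono i j k pq.1 pq.2) C * (a ^ (3 - pq.1 - pq.2) * b ^ pq.1 * c ^ pq.2) := by
        refine Finset.sum_congr rfl fun pq _ => hgm pq.1 pq.2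
    _ = ∑ p ∈ range 4, ∑ q ∈ range 4, (if p + q ≤ 3 then
          coeff (mono i j k p q) C * (a ^ (3 - p - q) * b ^ p * c ^ q) else 0) := by
        rw [hP, Finset.sum_filter, Finset.sum_product]

lemma I1 {i j k : Fin n} (hij : i ≠ j) (hik : i ≠ k) (hjk : j ≠ k)
    {C : MvPolynomial (Fin n) ℤ} (hC : C.IsHomogeneous 3) :
    eval (vf i j k 1 0 0) C = coeff (Finsupp.single i 3) C := by
  rw [evalE hij hik hjk hC]
  simp only [Finset.sum_range_succ, Finset.sum_range_zero, mono]
  norm_num [Finsupp.single_zero]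

lemma I2 {i j k : Fin n} (hij : i ≠ j) (hik : i ≠ k) (hjk : j ≠ k)
    {C : MvPolynomial (Fin n) ℤ} (hC : C.IsHomogeneous 3) :
    eval (vf i j k 1 1 0) C - eval (vf i j k 1 (-1) 0) C - 2 * eval (vf i j k 0 1 0) C
      = 2 * coeff (Finsupp.single i 2 + Finsupp.single j 1) C := by
  rw [evalE hij hik hjk hC, evalE hij hik hjk hC, evalE hij hik hjk hC]
  simp only [Finset.sum_range_succ, Finset.sum_range_zero, mono]
  norm_num [Finsupp.single_zero]
  ring

lemma I3 {i j k : Fin n} (hij : i ≠ j) (hik : i ≠ k) (hjk : j ≠ k)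
    {C : MvPolynomial (Fin n) ℤ} (hC : C.IsHomogeneous 3) :
    eval (vf i j k 1 1 1) C - eval (vf i j k 1 1 (-1)) C - eval (vf i j k 1 (-1) 1) C
        + eval (vf i j k 1 (-1) (-1)) C
      = 4 * coeff (Finsupp.single i 1 + Finsupp.single j 1 + Finsupp.single k 1) C := by
  rw [evalE hij hik hjk hC, evalE hij hik hjk hC, evalE hij hik hjk hC, evalE hij hik hjk hC]
  simp only [Finset.sum_range_succ, Finset.sum_range_zero, mono]
  norm_num [Finsupp.single_zero]
  ring

/-- swap of the first two slots of `vf` when `a = 0`. -/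
lemma vf_swap {i j k : Fin n} (hij : i ≠ j) (hik : i ≠ k) (hjk : j ≠ k) (b : ℤ) :
    vf i j k 0 b 0 = vf j i k b 0 0 := by
  funext t
  simp only [vf]
  by_cases h1 : t = i <;> by_cases h2 : t = j <;> simp_all

/-- Bound for the value of a bounded homogeneous cubic at a vector with
support of size at most 6 and entries at most 3. -/
lemma evalBound {C : MvPolynomial (Fin n) ℤ} (hC : C.IsHomogeneous 3) {M : ℤ}
    (hco : ∀ d, |coeff d C| ≤ M) (S : Finset (Fin n)) (hS : S.card ≤ 6)
    (u : Fin n → ℤ) (hu0 : ∀ t, t ∉ S → u t = 0) (hu : ∀ t, |u t| ≤ 3) :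
    |eval u C| ≤ 5832 * M := by
  classical
  have hM0 : 0 ≤ M := le_trans (abs_nonneg _) (hco 0)
  rw [eval_eq]
  set T := C.support.filter (fun d => d.support ⊆ S) with hT
  have hzero : ∀ d ∈ C.support, d ∉ T → coeff d C * ∏ t ∈ d.support, u t ^ d t = 0 := by
    intro d hd hdT
    have hns : ¬ d.support ⊆ S := fun h => hdT (Finset.mem_filter.mpr ⟨hd, h⟩)
    obtain ⟨t, ht, ht'⟩ := Finset.not_subset.mp hns
    have hp : ∏ t' ∈ d.support, u t' ^ d t' = 0 :=
      Finset.prod_eq_zero ht (by rw [hu0 t ht']; exact zero_pow (Finsupp.mem_support_iff.mp ht))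
    rw [hp, mul_zero]
  rw [← Finset.sum_subset (Finset.filter_subset _ _) (fun d hd hd' => hzero d hd hd')]
  have hterm : ∀ d ∈ T, |coeff d C * ∏ t ∈ d.support, u t ^ d t| ≤ 27 * M := by
    intro d hd
    have hd' : d ∈ C.support := (Finset.mem_filter.mp hd).1
    have hdeg : ∑ t ∈ d.support, d t = 3 := degree_eq hC (mem_support_iff.mp hd')
    have h1 : |∏ t ∈ d.support, u t ^ d t| ≤ 27 := by
      rw [Finset.abs_prod]
      calc ∏ t ∈ d.support, |u t ^ d t| ≤ ∏ t ∈ d.support, 3 ^ d t := by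
            apply Finset.prod_le_prod (fun t _ => abs_nonneg _)
            intro t _
            rw [abs_pow]
            exact pow_le_pow_left₀ (abs_nonneg _) (hu t) _
        _ = 3 ^ (∑ t ∈ d.support, d t) := Finset.prod_pow_eq_pow_sum _ _ _
        _ = 27 := by rw [hdeg]; norm_num
    rw [abs_mul]
    calc |coeff d C| * |∏ t ∈ d.support, u t ^ d t| ≤ M * 27 :=
          mul_le_mul (hco d) h1 (abs_nonneg _) hM0
      _ = 27 * M := mul_comm _ _
  have hcard : T.card ≤ 216 := by
    have hsurj : Set.SurjOn (fun p : Fin n × Fin n × Fin n =>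
        Finsupp.single p.1 1 + Finsupp.single p.2.1 1 + Finsupp.single p.2.2 1)
        ↑(S ×ˢ S ×ˢ S) ↑T := by
      intro d hd
      rw [Finset.mem_coe, hT, Finset.mem_filter] at hd
      obtain ⟨hd1, hd2⟩ := hd
      have hdeg3 : (Finsupp.toMultiset d).card = 3 := by
        rw [Finsupp.card_toMultiset]
        have : d.sum (fun _ => id) = ∑ t ∈ d.support, d t := rfl
        rw [this]
        exact degree_eq hC (mem_support_iff.mp hd1)
      obtain ⟨x, y, z, hxyz⟩ := Multiset.card_eq_three.mp hdeg3
      have hrep : d = Finsupp.single x 1 + Finsupp.single y 1 + Finsupp.single z 1 := by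
        have hinj : Function.Injective (Finsupp.toMultiset (α := Fin n)) := by
          intro f g hfg
          have := congrArg Multiset.toFinsupp hfg
          rwa [Finsupp.toMultiset_toFinsupp, Finsupp.toMultiset_toFinsupp] at this
        apply hinj
        rw [hxyz]
        simp [Finsupp.toMultiset_add, Finsupp.toMultiset_single, Multiset.singleton_add,
          Multiset.insert_eq_cons]
      have hmem : ∀ w : Fin n, w ∈ ({x, y, z} : Multiset (Fin n)) → w ∈ S := by
        intro w hw
        apply hd2
        rw [← Finsupp.mem_toMultiset, hxyz]
        exact hw
      refine ⟨(x, y, z), ?_, hrep.symm⟩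
      rw [Finset.mem_coe, Finset.mem_product, Finset.mem_product]
      exact ⟨hmem x (by simp), hmem y (by simp), hmem z (by simp)⟩
    calc T.card ≤ (S ×ˢ S ×ˢ S).card := Finset.card_le_card_of_surjOn _ hsurj
      _ = S.card * (S.card * S.card) := by simp [Finset.card_product]
      _ ≤ 6 * (6 * 6) := by
          exact Nat.mul_le_mul hS (Nat.mul_le_mul hS hS)
      _ = 216 := by norm_num
  calc |∑ d ∈ T, coeff d C * ∏ t ∈ d.support, u t ^ d t|
      ≤ ∑ d ∈ T, |coeff d C * ∏ t ∈ d.support, u t ^ d t| := Finset.abs_sum_le_sum_abs _ _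
    _ ≤ ∑ _d ∈ T, 27 * M := Finset.sum_le_sum hterm
    _ = (T.card : ℤ) * (27 * M) := by rw [Finset.sum_const, nsmul_eq_mul]
    _ ≤ 216 * (27 * M) := by
        have h216 : (T.card : ℤ) ≤ 216 := by exact_mod_cast hcard
        have h27 : (0:ℤ) ≤ 27 * M := by positivity
        exact mul_le_mul_of_nonneg_right h216 h27
    _ = 5832 * M := by ring

lemma eval_linSub (U : Matrix (Fin n) (Fin n) ℤ) (C : MvPolynomial (Fin n) ℤ)
    (w : Fin n → ℤ) :
    eval w (bind₁ (fun i => ∑ j, MvPolynomial.C (U i j) * X j) C)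
      = eval (fun i => ∑ j, U i j * w j) C := by
  have h : eval w (bind₁ (fun i => ∑ j, MvPolynomial.C (U i j) * X j) C)
      = eval₂Hom (RingHom.id ℤ)
          (fun i => eval₂Hom (RingHom.id ℤ) w (∑ j, MvPolynomial.C (U i j) * X j)) C :=
    eval₂Hom_bind₁ (RingHom.id ℤ) w _ C
  rw [h]
  have h2 : (fun i => eval₂Hom (RingHom.id ℤ) w (∑ j, MvPolynomial.C (U i j) * X j))
      = fun i => ∑ j, U i j * w j := by
    funext i
    show eval w (∑ j, MvPolynomial.C (U i j) * X j) = _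
    simp
  rw [h2]
  rfl

lemma homog_linSub (U : Matrix (Fin n) (Fin n) ℤ) {C : MvPolynomial (Fin n) ℤ}
    (hC : C.IsHomogeneous 3) :
    (bind₁ (fun i => ∑ j, MvPolynomial.C (U i j) * X j) C).IsHomogeneous 3 := by
  have hg : ∀ i, ((∑ j, MvPolynomial.C (U i j) * X j) : MvPolynomial (Fin n) ℤ).IsHomogeneous 1 :=
    fun i => IsHomogeneous.sum _ _ _ (fun j _ => isHomogeneous_C_mul_X _ _)
  have h := hC.aeval (fun i => ∑ j, MvPolynomial.C (U i j) * X j) hg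
  rw [one_mul] at h
  exact h

lemma exists_third (hn : 3 ≤ n) (i j : Fin n) (hij : i ≠ j) :
    ∃ k : Fin n, i ≠ k ∧ j ≠ k := by
  obtain ⟨k, hk⟩ : ∃ k : Fin n, k ∉ ({i, j} : Finset (Fin n)) := by
    by_contra hc
    push_neg at hc
    have hs : (univ : Finset (Fin n)) ⊆ {i, j} := fun x _ => hc x
    have h3 := Finset.card_le_card hs
    have h1 : ({i, j} : Finset (Fin n)).card ≤ 2 := (Finset.card_insert_le _ _).trans (by simp)
    have h2 : (univ : Finset (Fin n)).card = n := by simp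
    omega
  simp only [Finset.mem_insert, Finset.mem_singleton, not_or] at hk
  exact ⟨k, fun h => hk.1 h.symm, fun h => hk.2 h.symm⟩

lemma exists_pair (hn : 3 ≤ n) (i : Fin n) : ∃ j k : Fin n, i ≠ j ∧ i ≠ k ∧ j ≠ k := by
  obtain ⟨j, hj⟩ : ∃ j : Fin n, j ∉ ({i} : Finset (Fin n)) := by
    by_contra hc
    push_neg at hc
    have hs : (univ : Finset (Fin n)) ⊆ {i} := fun x _ => hc x
    have h3 := Finset.card_le_card hs
    have h2 : (univ : Finset (Fin n)).card = n := by simp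
    simp only [Finset.card_singleton] at h3
    omega
  simp only [Finset.mem_singleton] at hj
  have hij : i ≠ j := fun h => hj h.symm
  obtain ⟨k, hik, hjk⟩ := exists_third hn i j hij
  exact ⟨j, k, hij, hik, hjk⟩

/-- support representation lemmas -/
lemma rep1 {d : Fin n →₀ ℕ} {x : Fin n} (h : d.support = {x}) (hd : d.degree = 3) :
    d = Finsupp.single x 3 := by
  have hx : d x = 3 := by
    have h1 : ∑ t ∈ d.support, d t = 3 := hd
    rw [h, Finset.sum_singleton] at h1
    exact h1
  ext t
  by_cases ht : t = x
  · subst ht; simp [hx]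
  · have h0 : t ∉ d.support := by rw [h]; simp [ht]
    rw [Finsupp.notMem_support_iff.mp h0, Finsupp.single_apply, if_neg (fun hh => ht hh.symm)]

lemma rep2 {d : Fin n →₀ ℕ} {x y : Fin n} (hxy : x ≠ y) (h : d.support = {x, y})
    (hd : d.degree = 3) :
    (d = Finsupp.single x 2 + Finsupp.single y 1) ∨
    (d = Finsupp.single y 2 + Finsupp.single x 1) := by
  have hsum : d x + d y = 3 := by
    have h1 : ∑ t ∈ d.support, d t = 3 := hd
    rw [h, Finset.sum_pair hxy] at h1
    exact h1
  have hx0 : d x ≠ 0 := Finsupp.mem_support_iff.mp (by rw [h]; simp)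
  have hy0 : d y ≠ 0 := Finsupp.mem_support_iff.mp (by rw [h]; simp)
  have hout : ∀ t, t ≠ x → t ≠ y → d t = 0 := by
    intro t h1 h2
    apply Finsupp.notMem_support_iff.mp
    rw [h]; simp [h1, h2]
  have hcases : (d x = 2 ∧ d y = 1) ∨ (d x = 1 ∧ d y = 2) := by omega
  rcases hcases with ⟨h1, h2⟩ | ⟨h1, h2⟩
  · left
    ext t
    by_cases ht : t = x
    · subst ht; simp [h1, Finsupp.single_apply, hxy, Ne.symm hxy]
    · by_cases ht' : t = y
      · subst ht'; simp [h2, Finsupp.single_apply, hxy, Ne.symm hxy]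
      · simp [hout t ht ht', Finsupp.single_apply, Ne.symm ht, Ne.symm ht', ht, ht']
  · right
    ext t
    by_cases ht : t = x
    · subst ht; simp [h1, Finsupp.single_apply, hxy, Ne.symm hxy]
    · by_cases ht' : t = y
      · subst ht'; simp [h2, Finsupp.single_apply, hxy, Ne.symm hxy]
      · simp [hout t ht ht', Finsupp.single_apply, Ne.symm ht, Ne.symm ht', ht, ht']

lemma rep3 {d : Fin n →₀ ℕ} {x y z : Fin n} (hxy : x ≠ y) (hxz : x ≠ z) (hyz : y ≠ z)
    (h : d.support = {x, y, z}) (hd : d.degree = 3) :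
    d = Finsupp.single x 1 + Finsupp.single y 1 + Finsupp.single z 1 := by
  have hsum : d x + (d y + d z) = 3 := by
    have h1 : ∑ t ∈ d.support, d t = 3 := hd
    rw [h, Finset.sum_insert (by simp [hxy, hxz]), Finset.sum_pair hyz] at h1
    exact h1
  have hx0 : d x ≠ 0 := Finsupp.mem_support_iff.mp (by rw [h]; simp)
  have hy0 : d y ≠ 0 := Finsupp.mem_support_iff.mp (by rw [h]; simp)
  have hz0 : d z ≠ 0 := Finsupp.mem_support_iff.mp (by rw [h]; simp)
  have hout : ∀ t, t ≠ x → t ≠ y → t ≠ z → d t = 0 := by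
    intro t h1 h2 h3
    apply Finsupp.notMem_support_iff.mp
    rw [h]; simp [h1, h2, h3]
  have hx : d x = 1 := by omega
  have hy : d y = 1 := by omega
  have hz : d z = 1 := by omega
  ext t
  by_cases ht : t = x
  · subst ht; simp [hx, Finsupp.single_apply, hxy, hxz, Ne.symm hxy, Ne.symm hxz]
  · by_cases ht' : t = y
    · subst ht'; simp [hy, Finsupp.single_apply, Ne.symm hxy, hyz, hxy, Ne.symm hyz]
    · by_cases ht'' : t = z
      · subst ht''; simp [hz, Finsupp.single_apply, Ne.symm hxz, Ne.symm hyz, hxz, hyz]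
      · simp [hout t ht ht' ht'', Finsupp.single_apply, Ne.symm ht, Ne.symm ht', Ne.symm ht'',
          ht, ht', ht'']

/-- Forward direction: find a good small vector where `|C|` is large. -/
lemma exists_goodvec (hn : 3 ≤ n) {C : MvPolynomial (Fin n) ℤ}
    (hC : C.IsHomogeneous 3) {M : ℤ} (hM : 1 ≤ M)
    (hb : ∀ d, |coeff d C| ≤ M) (hmax : ∃ d, |coeff d C| = M) :
    ∃ (i j k : Fin n) (b c : ℤ), i ≠ j ∧ i ≠ k ∧ j ≠ k ∧ |b| ≤ 1 ∧ |c| ≤ 1 ∧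
      M ≤ 2 * |eval (vf i j k 1 b c) C| := by
  obtain ⟨d, hd⟩ := hmax
  have hd0 : coeff d C ≠ 0 := by
    intro h; rw [h, abs_zero] at hd; omega
  have hdeg : d.degree = 3 := degree_eq hC hd0
  have hsum3 : ∑ t ∈ d.support, d t = 3 := hdeg
  have hcard1 : 1 ≤ d.support.card := by
    rcases Finset.eq_empty_or_nonempty d.support with h | h
    · rw [h] at hsum3; simp at hsum3
    · exact Finset.card_pos.mpr h
  have hcard3 : d.support.card ≤ 3 := by
    have h1 : d.support.card = ∑ _t ∈ d.support, 1 := by simp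
    have h2 : ∑ t ∈ d.support, 1 ≤ ∑ t ∈ d.support, d t :=
      Finset.sum_le_sum (fun t ht => Nat.one_le_iff_ne_zero.mpr (Finsupp.mem_support_iff.mp ht))
    omega
  have main2 : ∀ x y : Fin n, x ≠ y →
      |coeff (Finsupp.single x 2 + Finsupp.single y 1) C| = M →
      ∃ (i j k : Fin n) (b c : ℤ), i ≠ j ∧ i ≠ k ∧ j ≠ k ∧ |b| ≤ 1 ∧ |c| ≤ 1 ∧
        M ≤ 2 * |eval (vf i j k 1 b c) C| := by
    intro x y hxy hcoeff
    obtain ⟨k, hxk, hyk⟩ := exists_third hn x y hxy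
    have hI2 := I2 hxy hxk hyk hC
    set A := eval (vf x y k 1 1 0) C with hA'
    set B := eval (vf x y k 1 (-1) 0) C with hB'
    set G := eval (vf x y k 0 1 0) C with hG'
    by_cases hA : M ≤ 2 * |A|
    · exact ⟨x, y, k, 1, 0, hxy, hxk, hyk, by norm_num, by norm_num, hA⟩
    by_cases hB : M ≤ 2 * |B|
    · exact ⟨x, y, k, -1, 0, hxy, hxk, hyk, by norm_num, by norm_num, hB⟩
    have htri : |A - B - 2 * G| ≤ |A| + |B| + 2 * |G| := by
      calc |A - B - 2 * G| ≤ |A - B| + |2 * G| := abs_sub _ _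
        _ ≤ (|A| + |B|) + |2 * G| := by
            exact add_le_add_left (abs_sub _ _) _
        _ = |A| + |B| + 2 * |G| := by rw [abs_mul]; norm_num
    have h2M : |A - B - 2 * G| = 2 * M := by
      rw [hI2, abs_mul, hcoeff]; norm_num
    have hG : M ≤ 2 * |G| := by
      push_neg at hA hB
      omega
    have hswap : vf y x k (1:ℤ) 0 0 = vf x y k 0 1 0 := (vf_swap hxy hxk hyk 1).symm
    refine ⟨y, x, k, 0, 0, hxy.symm, hyk, hxk, by norm_num, by norm_num, ?_⟩
    rw [hswap]
    exact hG
  rcases hc1 : d.support.card with _ | _ | _ | _ | m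
  · omega
  · -- card = 1
    obtain ⟨x, hx⟩ := Finset.card_eq_one.mp hc1
    have hrep := rep1 hx hdeg
    obtain ⟨j, k, hxj, hxk, hjk⟩ := exists_pair hn x
    refine ⟨x, j, k, 0, 0, hxj, hxk, hjk, by norm_num, by norm_num, ?_⟩
    rw [I1 hxj hxk hjk hC, ← hrep, hd]
    omega
  · -- card = 2
    obtain ⟨x, y, hxy, hx⟩ := Finset.card_eq_two.mp hc1
    rcases rep2 hxy hx hdeg with hrep | hrep
    · exact main2 x y hxy (by rw [← hrep]; exact hd)
    · exact main2 y x hxy.symm (by rw [← hrep]; exact hd)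
  · -- card = 3
    obtain ⟨x, y, z, hxy, hxz, hyz, hx⟩ := Finset.card_eq_three.mp hc1
    have hrep := rep3 hxy hxz hyz hx hdeg
    have hI3 := I3 hxy hxz hyz hC
    set A1 := eval (vf x y z 1 1 1) C with h1'
    set A2 := eval (vf x y z 1 1 (-1)) C with h2'
    set A3 := eval (vf x y z 1 (-1) 1) C with h3'
    set A4 := eval (vf x y z 1 (-1) (-1)) C with h4'
    by_cases hA1 : M ≤ 2 * |A1|
    · exact ⟨x, y, z, 1, 1, hxy, hxz, hyz, by norm_num, by norm_num, hA1⟩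
    by_cases hA2 : M ≤ 2 * |A2|
    · exact ⟨x, y, z, 1, -1, hxy, hxz, hyz, by norm_num, by norm_num, hA2⟩
    by_cases hA3 : M ≤ 2 * |A3|
    · exact ⟨x, y, z, -1, 1, hxy, hxz, hyz, by norm_num, by norm_num, hA3⟩
    by_cases hA4 : M ≤ 2 * |A4|
    · exact ⟨x, y, z, -1, -1, hxy, hxz, hyz, by norm_num, by norm_num, hA4⟩
    exfalso
    have htri : |A1 - A2 - A3 + A4| ≤ |A1| + |A2| + |A3| + |A4| := by
      calc |A1 - A2 - A3 + A4| ≤ |A1 - A2 - A3| + |A4| := abs_add_le _ _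
        _ ≤ (|A1 - A2| + |A3|) + |A4| := add_le_add_left (abs_sub _ _) _
        _ ≤ ((|A1| + |A2|) + |A3|) + |A4| :=
            add_le_add_left (add_le_add_left (abs_sub _ _) _) _
        _ = |A1| + |A2| + |A3| + |A4| := by ring
    have h4M : |A1 - A2 - A3 + A4| = 4 * M := by
      rw [hI3, ← hrep, abs_mul, hd]; norm_num
    push_neg at hA1 hA2 hA3 hA4
    omega
  · omega

/-- Reverse direction: all coefficients are bounded by values at small vectors. -/
lemma coeff_bound (hn : 3 ≤ n) {F : MvPolynomial (Fin n) ℤ} (hF : F.IsHomogeneous 3)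
    {K : ℤ}
    (hK : ∀ (i j k : Fin n) (b c : ℤ), i ≠ j → i ≠ k → j ≠ k → |b| ≤ 1 → |c| ≤ 1 →
      |eval (vf i j k 1 b c) F| ≤ K) :
    ∀ e, |coeff e F| ≤ 2 * K := by
  intro e
  obtain ⟨i0, j0, k0, h01, h02, h12⟩ : ∃ i j k : Fin n, i ≠ j ∧ i ≠ k ∧ j ≠ k := by
    obtain ⟨j, k, h⟩ := exists_pair hn ⟨0, by omega⟩
    exact ⟨_, j, k, h.1, h.2.1, h.2.2⟩
  have hK0 : 0 ≤ K :=
    le_trans (abs_nonneg _) (hK i0 j0 k0 0 0 h01 h02 h12 (by norm_num) (by norm_num))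
  by_cases he : coeff e F = 0
  · rw [he, abs_zero]; omega
  have hdeg : e.degree = 3 := degree_eq hF he
  have hsum3 : ∑ t ∈ e.support, e t = 3 := hdeg
  have hcard1 : 1 ≤ e.support.card := by
    rcases Finset.eq_empty_or_nonempty e.support with h | h
    · rw [h] at hsum3; simp at hsum3
    · exact Finset.card_pos.mpr h
  have hcard3 : e.support.card ≤ 3 := by
    have h1 : e.support.card = ∑ _t ∈ e.support, 1 := by simp
    have h2 : ∑ t ∈ e.support, 1 ≤ ∑ t ∈ e.support, e t :=
      Finset.sum_le_sum (fun t ht => Nat.one_le_iff_ne_zero.mpr (Finsupp.mem_support_iff.mp ht))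
    omega
  have main2 : ∀ x y : Fin n, x ≠ y →
      |coeff (Finsupp.single x 2 + Finsupp.single y 1) F| ≤ 2 * K := by
    intro x y hxy
    obtain ⟨k, hxk, hyk⟩ := exists_third hn x y hxy
    have hI2 := I2 hxy hxk hyk hF
    set A := eval (vf x y k 1 1 0) F with hA'
    set B := eval (vf x y k 1 (-1) 0) F with hB'
    set G := eval (vf x y k 0 1 0) F with hG'
    have hA : |A| ≤ K := hK x y k 1 0 hxy hxk hyk (by norm_num) (by norm_num)
    have hB : |B| ≤ K := hK x y k (-1) 0 hxy hxk hyk (by norm_num) (by norm_num)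
    have hG : |G| ≤ K := by
      have hswap : vf y x k (1:ℤ) 0 0 = vf x y k 0 1 0 := (vf_swap hxy hxk hyk 1).symm
      have := hK y x k 0 0 hxy.symm hyk hxk (by norm_num) (by norm_num)
      rwa [hswap] at this
    have htri : |A - B - 2 * G| ≤ |A| + |B| + 2 * |G| := by
      calc |A - B - 2 * G| ≤ |A - B| + |2 * G| := abs_sub _ _
        _ ≤ (|A| + |B|) + |2 * G| := add_le_add_left (abs_sub _ _) _
        _ = |A| + |B| + 2 * |G| := by rw [abs_mul]; norm_num
    have h2M : |A - B - 2 * G| = 2 * |coeff (Finsupp.single x 2 + Finsupp.single y 1) F| := by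
      rw [hI2, abs_mul]; norm_num
    omega
  rcases hc1 : e.support.card with _ | _ | _ | _ | m
  · omega
  · obtain ⟨x, hx⟩ := Finset.card_eq_one.mp hc1
    have hrep := rep1 hx hdeg
    obtain ⟨j, k, hxj, hxk, hjk⟩ := exists_pair hn x
    have h := hK x j k 0 0 hxj hxk hjk (by norm_num) (by norm_num)
    rw [I1 hxj hxk hjk hF] at h
    rw [hrep]
    omega
  · obtain ⟨x, y, hxy, hx⟩ := Finset.card_eq_two.mp hc1
    rcases rep2 hxy hx hdeg with hrep | hrep
    · rw [hrep]; exact main2 x y hxy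
    · rw [hrep]; exact main2 y x hxy.symm
  · obtain ⟨x, y, z, hxy, hxz, hyz, hx⟩ := Finset.card_eq_three.mp hc1
    have hrep := rep3 hxy hxz hyz hx hdeg
    have hI3 := I3 hxy hxz hyz hF
    set A1 := eval (vf x y z 1 1 1) F with h1'
    set A2 := eval (vf x y z 1 1 (-1)) F with h2'
    set A3 := eval (vf x y z 1 (-1) 1) F with h3'
    set A4 := eval (vf x y z 1 (-1) (-1)) F with h4'
    have hA1 : |A1| ≤ K := hK x y z 1 1 hxy hxz hyz (by norm_num) (by norm_num)
    have hA2 : |A2| ≤ K := hK x y z 1 (-1) hxy hxz hyz (by norm_num) (by norm_num)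
    have hA3 : |A3| ≤ K := hK x y z (-1) 1 hxy hxz hyz (by norm_num) (by norm_num)
    have hA4 : |A4| ≤ K := hK x y z (-1) (-1) hxy hxz hyz (by norm_num) (by norm_num)
    have htri : |A1 - A2 - A3 + A4| ≤ |A1| + |A2| + |A3| + |A4| := by
      calc |A1 - A2 - A3 + A4| ≤ |A1 - A2 - A3| + |A4| := abs_add_le _ _
        _ ≤ (|A1 - A2| + |A3|) + |A4| := add_le_add_left (abs_sub _ _) _
        _ ≤ ((|A1| + |A2|) + |A3|) + |A4| :=
            add_le_add_left (add_le_add_left (abs_sub _ _) _) _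
        _ = |A1| + |A2| + |A3| + |A4| := by ring
    have h4M : |A1 - A2 - A3 + A4|
        = 4 * |coeff (Finsupp.single x 1 + Finsupp.single y 1 + Finsupp.single z 1) F| := by
      rw [hI3, abs_mul]; norm_num
    rw [hrep]
    omega
  · omega

end Stmt1Aux

/-- A unimodular change of variables puts a cubic form into a shape where the
coefficient of `X 0 ^ 3` (possibly after negating the form) is `≫ M`, while all
coefficients stay `≪ M`. -/
theorem stmt_1 :
    ∃ c c' : ℝ, 0 < c ∧ 0 < c' ∧
      ∀ (n : ℕ) (hn : 3 ≤ n) (C : MvPolynomial (Fin n) ℤ) (M : ℤ),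
        1 ≤ M → C.IsHomogeneous 3 →
        (∀ d, |C.coeff d| ≤ M) → (∃ d, |C.coeff d| = M) →
        ∃ (U : Matrix (Fin n) (Fin n) ℤ) (ε : ℤ), IsUnit U.det ∧ (ε = 1 ∨ ε = -1) ∧
          (∀ d, ((|(MvPolynomial.bind₁
              (fun i => ∑ j, MvPolynomial.C (U i j) * MvPolynomial.X j) C).coeff d| : ℤ) : ℝ)
            ≤ c * (M : ℝ)) ∧
          c' * (M : ℝ) ≤ ((ε * (MvPolynomial.bind₁
              (fun i => ∑ j, MvPolynomial.C (U i j) * MvPolynomial.X j) C).coeff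
                (Finsupp.single (⟨0, by omega⟩ : Fin n) 3) : ℤ) : ℝ) := by
  classical
  refine ⟨11664, 1/2, by norm_num, by norm_num, ?_⟩
  intro n hn C M hM hC hb hmax
  obtain ⟨i, j, k, b, c, hij, hik, hjk, hb1, hc1, hbig⟩ :=
    Stmt1Aux.exists_goodvec hn hC hM hb hmax
  set z : Fin n := ⟨0, by omega⟩ with hz
  set π : Equiv.Perm (Fin n) := Equiv.swap z i with hπ
  set L : Matrix (Fin n) (Fin n) ℤ :=
    Matrix.transvection j i b * Matrix.transvection k i c with hL
  set U : Matrix (Fin n) (Fin n) ℤ := L * π.toPEquiv.toMatrix with hU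
  have hLe : ∀ t s, L t s = (if t = s then 1 else 0) +
      ((if j = t ∧ i = s then b else 0) + (if k = t ∧ i = s then c else 0)) := by
    intro t s
    have hmul0 : Matrix.single j i b * Matrix.single k i c = 0 :=
      Matrix.single_mul_single_of_ne _ _ _ _ hik _
    have hexp : L = 1 + (Matrix.single j i b + Matrix.single k i c) := by
      rw [hL, Matrix.transvection, Matrix.transvection]
      rw [add_mul, mul_add, mul_add, one_mul, mul_one, hmul0]
      noncomm_ring
    rw [hexp]
    simp [Matrix.add_apply, Matrix.one_apply, Matrix.single_apply]
  have hLbound : ∀ t s, |L t s| ≤ 1 := by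
    intro t s
    rw [hLe t s]
    by_cases h2 : j = t ∧ i = s
    · by_cases h3 : k = t ∧ i = s
      · exact absurd (h2.1.trans h3.1.symm) hjk
      · have h1 : ¬ t = s := fun h => hij (h2.2.trans (h ▸ h2.1 : j = s).symm)
        have hk : ¬ k = t := fun h => h3 ⟨h, h2.2⟩
        simpa [h1, h2, h3, hk] using hb1
    · by_cases h3 : k = t ∧ i = s
      · have h1 : ¬ t = s := fun h => hik (h3.2.trans (h ▸ h3.1 : k = s).symm)
        have hj : ¬ j = t := fun h => h2 ⟨h, h3.2⟩
        simpa [h1, h2, h3, hj] using hc1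
      · rcases eq_or_ne t s with h1 | h1
        · subst h1; simp [h2, h3]
        · simp [h1, h2, h3]
  have hL0 : ∀ t s, t ≠ s → t ≠ j → t ≠ k → L t s = 0 := by
    intro t s h1 h2 h3
    rw [hLe t s]
    simp [h1, Ne.symm h2, Ne.symm h3]
  have hUe : ∀ t s, U t s = L t (π s) := by
    intro t s
    rw [hU, PEquiv.mul_toMatrix_toPEquiv, Matrix.submatrix_apply]
    have : Equiv.symm π = π := by rw [hπ]; exact Equiv.symm_swap z i
    rw [this]
    rfl
  have hdet : IsUnit U.det := by
    rw [hU, Matrix.det_mul, hL, Matrix.det_mul,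
      Matrix.det_transvection_of_ne j i (fun h => hij h.symm) b,
      Matrix.det_transvection_of_ne k i (fun h => hik h.symm) c, one_mul, one_mul]
    rw [show π.toPEquiv.toMatrix = π.permMatrix ℤ from rfl, Matrix.det_permutation]
    exact (Equiv.Perm.sign π).isUnit
  set v : Fin n → ℤ := Stmt1Aux.vf i j k 1 b c with hv
  have hcol : ∀ t, U t z = v t := by
    intro t
    rw [hUe t z, hv]
    have hπz : π z = i := Equiv.swap_apply_left z i
    rw [hπz]
    rw [hLe t i]
    by_cases h1 : t = i
    · subst h1
      simp [Stmt1Aux.vf, Ne.symm hij, Ne.symm hik]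
    · by_cases h2 : t = j
      · subst h2
        simp [Stmt1Aux.vf, Ne.symm hij, Ne.symm hjk, h1]
      · by_cases h3 : t = k
        · subst h3
          simp [Stmt1Aux.vf, Ne.symm hik, Ne.symm hjk, hjk, h1]
        · simp [Stmt1Aux.vf, h1, h2, h3, Ne.symm h2, Ne.symm h3]
  set D := MvPolynomial.bind₁
    (fun i' => ∑ j', MvPolynomial.C (U i' j') * MvPolynomial.X j') C with hD'
  have hD : D.IsHomogeneous 3 := Stmt1Aux.homog_linSub U hC
  have hwb : ∀ (i' j' k' : Fin n) (b' c' : ℤ), |b'| ≤ 1 → |c'| ≤ 1 →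
      ∀ s, |Stmt1Aux.vf i' j' k' 1 b' c' s| ≤ 1 := by
    intro i' j' k' b' c' hb' hc' s
    simp only [Stmt1Aux.vf]
    split_ifs <;> simp [hb', hc']
  have hwsupp : ∀ (i' j' k' : Fin n) (b' c' : ℤ) s,
      Stmt1Aux.vf i' j' k' 1 b' c' s ≠ 0 → s = i' ∨ s = j' ∨ s = k' := by
    intro i' j' k' b' c' s hs
    by_contra hcon
    push_neg at hcon
    simp [Stmt1Aux.vf, hcon.1, hcon.2.1, hcon.2.2] at hs
  have hKb : ∀ (i' j' k' : Fin n) (b' c' : ℤ), i' ≠ j' → i' ≠ k' → j' ≠ k' →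
      |b'| ≤ 1 → |c'| ≤ 1 →
      |MvPolynomial.eval (Stmt1Aux.vf i' j' k' 1 b' c') D| ≤ 5832 * M := by
    intro i' j' k' b' c' _ _ _ hb' hc'
    rw [hD', Stmt1Aux.eval_linSub]
    set w := Stmt1Aux.vf i' j' k' 1 b' c' with hw
    set S : Finset (Fin n) := {π i', π j', π k', j, k} with hS
    have hScard : S.card ≤ 6 := by
      have h1 := Finset.card_insert_le (π i') ({π j', π k', j, k} : Finset (Fin n))
      have h2 := Finset.card_insert_le (π j') ({π k', j, k} : Finset (Fin n))
      have h3 := Finset.card_insert_le (π k') ({j, k} : Finset (Fin n))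
      have h4 := Finset.card_insert_le j ({k} : Finset (Fin n))
      have h5 : ({k} : Finset (Fin n)).card = 1 := Finset.card_singleton k
      rw [hS]
      omega
    apply Stmt1Aux.evalBound hC hb S hScard
    · -- support
      intro t ht
      apply Finset.sum_eq_zero
      intro s _
      by_cases hws : w s = 0
      · rw [hws, mul_zero]
      · have hmem := hwsupp i' j' k' b' c' s hws
        have htne : t ≠ π s := by
          intro h
          apply ht
          rw [hS]
          rcases hmem with h' | h' | h' <;> subst h' <;> simp [h]
        have htj : t ≠ j := fun h => ht (by rw [hS]; simp [h])
        have htk : t ≠ k := fun h => ht (by rw [hS]; simp [h])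
        rw [hUe t s, hL0 t (π s) htne htj htk, zero_mul]
    · -- bound 3
      intro t
      have hsum : ∑ s, U t s * w s = ∑ s ∈ ({i', j', k'} : Finset (Fin n)), U t s * w s := by
        symm
        apply Finset.sum_subset (Finset.subset_univ _)
        intro s _ hs
        have : w s = 0 := by
          by_contra hws
          rcases hwsupp i' j' k' b' c' s hws with h | h | h <;> subst h <;> simp at hs
        rw [this, mul_zero]
      rw [hsum]
      calc |∑ s ∈ ({i', j', k'} : Finset (Fin n)), U t s * w s|
          ≤ ∑ s ∈ ({i', j', k'} : Finset (Fin n)), |U t s * w s| :=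
            Finset.abs_sum_le_sum_abs _ _
        _ ≤ ∑ _s ∈ ({i', j', k'} : Finset (Fin n)), 1 := by
            apply Finset.sum_le_sum
            intro s _
            rw [abs_mul, hUe t s]
            calc |L t (π s)| * |w s| ≤ 1 * 1 :=
                mul_le_mul (hLbound _ _) (hwb i' j' k' b' c' hb' hc' s) (abs_nonneg _)
                  (by norm_num)
              _ = 1 := by norm_num
        _ = (({i', j', k'} : Finset (Fin n)).card : ℤ) := by rw [Finset.sum_const]; simp
        _ ≤ 3 := by
            have h1 := Finset.card_insert_le i' ({j', k'} : Finset (Fin n))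
            have h2 := Finset.card_insert_le j' ({k'} : Finset (Fin n))
            have h3 : ({k'} : Finset (Fin n)).card = 1 := Finset.card_singleton k'
            have : ({i', j', k'} : Finset (Fin n)).card ≤ 3 := by omega
            exact_mod_cast this
  have hall : ∀ e, |MvPolynomial.coeff e D| ≤ 2 * (5832 * M) :=
    Stmt1Aux.coeff_bound hn hD hKb
  -- the top coefficient
  obtain ⟨j2, k2, hzj2, hzk2, hj2k2⟩ := Stmt1Aux.exists_pair hn z
  have hI1 := Stmt1Aux.I1 hzj2 hzk2 hj2k2 hD
  have heval : MvPolynomial.eval (Stmt1Aux.vf z j2 k2 1 0 0) D = MvPolynomial.eval v C := by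
    rw [hD', Stmt1Aux.eval_linSub]
    have hsimp : ∀ s, Stmt1Aux.vf z j2 k2 (1:ℤ) 0 0 s = if s = z then 1 else 0 := by
      intro s
      simp only [Stmt1Aux.vf]
      split_ifs <;> rfl
    have hfun : (fun t => ∑ s, U t s * Stmt1Aux.vf z j2 k2 1 0 0 s) = v := by
      funext t
      calc ∑ s, U t s * Stmt1Aux.vf z j2 k2 1 0 0 s
          = ∑ s, if s = z then U t s else 0 := by
            refine Finset.sum_congr rfl fun s _ => ?_
            rw [hsimp s, mul_boole]
        _ = U t z := by rw [Finset.sum_ite_eq' Finset.univ z (fun s => U t s)]; simp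
        _ = v t := hcol t
    rw [hfun]
  have hcoeffD : MvPolynomial.coeff (Finsupp.single z 3) D = MvPolynomial.eval v C := by
    rw [← hI1, heval]
  set t0 := MvPolynomial.eval v C with ht0
  set ε : ℤ := if 0 ≤ t0 then 1 else -1 with hε'
  have hεt0 : ε * t0 = |t0| := by
    rw [hε']
    split_ifs with h
    · rw [one_mul, abs_of_nonneg h]
    · rw [abs_of_neg (lt_of_not_ge h)]; ring
  refine ⟨U, ε, hdet, ?_, ?_, ?_⟩
  · rw [hε']; split_ifs <;> simp
  · intro d
    have h1 := hall d
    have h2 : ((|MvPolynomial.coeff d D| : ℤ) : ℝ) ≤ ((2 * (5832 * M) : ℤ) : ℝ) := by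
      exact_mod_cast h1
    calc ((|MvPolynomial.coeff d D| : ℤ) : ℝ) ≤ ((2 * (5832 * M) : ℤ) : ℝ) := h2
      _ = 11664 * (M : ℝ) := by push_cast; ring
  · have hgoal : (M : ℝ) ≤ 2 * |(t0 : ℝ)| := by
      have : (M : ℝ) ≤ ((2 * |t0| : ℤ) : ℝ) := by exact_mod_cast hbig
      rw [Int.cast_mul, Int.cast_abs] at this
      convert this using 2 <;> norm_num
    have hc : MvPolynomial.coeff (Finsupp.single z 3) D = t0 := hcoeffD
    rw [show (MvPolynomial.bind₁
        (fun i' => ∑ j', MvPolynomial.C (U i' j') * MvPolynomial.X j') C) = D from rfl]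
    have : ε * MvPolynomial.coeff (Finsupp.single z 3) D = |t0| := by rw [hc, hεt0]
    rw [show (Finsupp.single (⟨0, by omega⟩ : Fin n) 3) = Finsupp.single z 3 from rfl, this]
    rw [Int.cast_abs]
    linarith [hgoal]
end

section
/- Let p be a prime and let C ∈ 𝔽_p[X_1,…,X_n] be a cubic form with a singular zero at e_1 = (1,0,…,0). Then C can be written as C(X) = X_1·Q(X_2,…,X_n) + C̃(X_2,…,X_n) for some quadratic form Q and cubic form C̃ not involving X_1. If moreover C is non-degenerate (so Q is not identically zero), then C has at least p^{n-1} - 2p^{n-2} non-singular zeros in 𝔽_p^n. -/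
open MvPolynomial Finset

private lemma aux_sz (F : Type) [Field F] [Fintype F] [DecidableEq F] :
    ∀ (n : ℕ) (Q : MvPolynomial (Fin n) F), Q ≠ 0 →
      (univ.filter (fun x : Fin n → F => eval x Q = 0)).card * Fintype.card F
        ≤ Q.totalDegree * (Fintype.card F) ^ n := by
  intro n
  induction n with
  | zero =>
    intro Q hQ
    obtain ⟨a, rfl⟩ := MvPolynomial.C_surjective (Fin 0) Q
    have ha : a ≠ 0 := fun h => hQ (by simp [h])
    have : (univ.filter (fun x : Fin 0 → F => eval x (C a) = 0)) = ∅ := by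
      ext x; simp [ha]
    simp [this, ha]
  | succ n ih =>
    intro Q hQ
    set q : Polynomial (MvPolynomial (Fin n) F) := finSuccEquiv F n Q with hq
    have hq0 : q ≠ 0 := by
      simpa [hq] using (map_ne_zero_iff _ (finSuccEquiv F n).injective).mpr hQ
    set d : ℕ := q.natDegree with hd
    set lead : MvPolynomial (Fin n) F := q.coeff d with hlead
    have hlead0 : lead ≠ 0 := by
      simpa [hlead, hd] using Polynomial.leadingCoeff_ne_zero.mpr hq0
    have hdeg : lead.totalDegree + d ≤ Q.totalDegree :=
      totalDegree_coeff_finSuccEquiv_add_le Q d hlead0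
    -- fiberwise count
    have key : (univ.filter (fun x : Fin (n+1) → F => eval x Q = 0)).card ≤
        ∑ s : Fin n → F, (if eval s lead = 0 then Fintype.card F else d) := by
      rw [Finset.card_eq_sum_card_fiberwise
        (f := fun x : Fin (n+1) → F => Fin.tail x) (t := univ) (fun x _ => mem_univ _)]
      apply Finset.sum_le_sum
      intro s _
      set f : Polynomial F := q.map (eval s) with hf
      have heval : ∀ x : Fin (n+1) → F, Fin.tail x = s →
          eval x Q = Polynomial.eval (x 0) f := by
        intro x hx
        subst hx
        have := eval_eq_eval_mv_eval' (Fin.tail x) (x 0) Q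
        rw [Fin.cons_self_tail] at this
        simpa [hf, hq] using this
      by_cases hl : eval s lead = 0
      · rw [if_pos hl]
        calc ((univ.filter (fun x : Fin (n+1) → F => eval x Q = 0)).filter
              (fun x => Fin.tail x = s)).card
            ≤ (univ.filter (fun x : Fin (n+1) → F => Fin.tail x = s)).card := by
              apply Finset.card_le_card; intro x hx
              simp only [mem_filter, mem_univ, true_and] at hx ⊢; exact hx.2
          _ ≤ Fintype.card F := by
              apply Finset.card_le_card_of_injOn (fun x => x 0)
              · intro x _; exact mem_univ _
              · intro x hx y hy hxy
                simp only [coe_filter, Set.mem_setOf_eq] at hx hy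
                have hxy' : x 0 = y 0 := hxy
                have : Fin.cons (x 0) (Fin.tail x) = Fin.cons (y 0) (Fin.tail y) := by
                  rw [hxy', hx.2, hy.2]
                simpa [Fin.cons_self_tail] using this
          _ = Fintype.card F := by simp
      · rw [if_neg hl]
        have hfz : f ≠ 0 := by
          intro h0
          apply hl
          have := congrArg (fun g => Polynomial.coeff g d) h0
          simpa [hf, Polynomial.coeff_map] using this
        calc ((univ.filter (fun x : Fin (n+1) → F => eval x Q = 0)).filter
                (fun x => Fin.tail x = s)).card
              ≤ f.roots.toFinset.card := by
                apply Finset.card_le_card_of_injOn (fun x => x 0)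
                · intro x hx
                  simp only [Finset.mem_coe, mem_filter, mem_univ, true_and] at hx
                  dsimp only
                  rw [Finset.mem_coe, Multiset.mem_toFinset, Polynomial.mem_roots hfz]
                  rw [Polynomial.IsRoot, ← heval x hx.2]
                  exact hx.1
                · intro x hx y hy hxy
                  simp only [coe_filter, mem_filter, mem_univ, true_and, Set.mem_setOf_eq] at hx hy
                  have hxy' : x 0 = y 0 := hxy
                  have : Fin.cons (x 0) (Fin.tail x) = Fin.cons (y 0) (Fin.tail y) := by
                    rw [hxy', hx.2, hy.2]
                  simpa [Fin.cons_self_tail] using this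
            _ ≤ f.natDegree := (Multiset.toFinset_card_le _).trans (Polynomial.card_roots' f)
            _ ≤ d := Polynomial.natDegree_map_le
    -- now sum the bound
    have sum_bound : (∑ s : Fin n → F, (if eval s lead = 0 then Fintype.card F else d)) ≤
        (univ.filter (fun s : Fin n → F => eval s lead = 0)).card * Fintype.card F
          + (Fintype.card F) ^ n * d := by
      rw [Finset.sum_ite, Finset.sum_const, Finset.sum_const, smul_eq_mul, smul_eq_mul]
      refine Nat.add_le_add le_rfl (Nat.mul_le_mul_right _ ?_)
      exact (Finset.card_filter_le _ _).trans (by simp [Finset.card_univ])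
    have ihl := ih lead hlead0
    calc (univ.filter (fun x : Fin (n+1) → F => eval x Q = 0)).card * Fintype.card F
        ≤ ((univ.filter (fun s : Fin n → F => eval s lead = 0)).card * Fintype.card F
            + (Fintype.card F) ^ n * d) * Fintype.card F :=
          Nat.mul_le_mul_right _ (key.trans sum_bound)
      _ = ((univ.filter (fun s : Fin n → F => eval s lead = 0)).card * Fintype.card F)
            * Fintype.card F + d * (Fintype.card F) ^ (n+1) := by ring
      _ ≤ (lead.totalDegree * (Fintype.card F) ^ n) * Fintype.card F
            + d * (Fintype.card F) ^ (n+1) := by gcongr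
      _ = (lead.totalDegree + d) * (Fintype.card F) ^ (n+1) := by ring
      _ ≤ Q.totalDegree * (Fintype.card F) ^ (n+1) := Nat.mul_le_mul_right _ hdeg

private lemma aux_eval_update_eq {R : Type} [CommRing R] {n : ℕ} {i0 : Fin n}
    {P : MvPolynomial (Fin n) R} (h : i0 ∉ P.vars) (x : Fin n → R) (c : R) :
    eval (Function.update x i0 c) P = eval x P := by
  rw [eval_eq, eval_eq]
  apply Finset.sum_congr rfl
  intro m hm
  congr 1
  apply Finset.prod_congr rfl
  intro i hi
  have hne : i ≠ i0 := fun he => h (he ▸ (mem_vars i).mpr ⟨m, hm, hi⟩)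
  rw [Function.update_of_ne hne]

private lemma aux_card_slice {F : Type} [Fintype F] [DecidableEq F] [Zero F] {n : ℕ} (i0 : Fin n)
    (P : (Fin n → F) → Prop) [DecidablePred P]
    (hP : ∀ x c, P (Function.update x i0 c) ↔ P x) :
    (univ.filter P).card
      = Fintype.card F * (univ.filter (fun x => x i0 = 0 ∧ P x)).card := by
  rw [Finset.card_eq_sum_card_fiberwise (f := fun x => Function.update x i0 0)
    (t := univ.filter (fun x => x i0 = 0 ∧ P x)) (fun x hx => by
      simp only [Finset.mem_coe, mem_filter, mem_univ, true_and] at hx ⊢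
      exact ⟨Function.update_self _ _ _, (hP x 0).mpr hx⟩)]
  rw [Finset.sum_congr rfl (fun b hb => ?_), Finset.sum_const, smul_eq_mul, mul_comm]
  simp only [mem_filter, mem_univ, true_and] at hb
  apply Finset.card_bij' (fun x _ => x i0) (fun y _ => Function.update b i0 y)
  · intro x hx
    exact mem_univ _
  · intro y _
    simp only [mem_filter, mem_univ, true_and]
    constructor
    · exact (hP b y).mpr hb.2
    · rw [Function.update_idem]
      conv_rhs => rw [← Function.update_eq_self i0 b]
      rw [hb.1]
  · intro x hx
    simp only [mem_filter, mem_univ, true_and] at hx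
    funext k
    by_cases hk : k = i0
    · subst hk; rw [Function.update_self]
    · rw [Function.update_of_ne hk, ← hx.2, Function.update_of_ne hk]
  · intro y _
    rw [Function.update_self]

variable {R : Type} [CommRing R] {n : ℕ}

private lemma aux_degree_eq_sum_univ (m : Fin n →₀ ℕ) : m.degree = ∑ k, m k := by
  rw [Finsupp.degree]
  exact Finset.sum_subset (subset_univ _) (by
    intro k _ hk
    simpa using Finsupp.notMem_support_iff.mp hk)

private lemma aux_eval_e0_monomial (i0 : Fin n) (s : Fin n →₀ ℕ) (a : R) :
    eval (fun j => if j = i0 then (1:R) else 0) (monomial s a)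
      = if s.support ⊆ {i0} then a else 0 := by
  rw [eval_monomial]
  by_cases h : s.support ⊆ {i0}
  · rw [if_pos h]
    rw [Finsupp.prod]
    have : ∀ i ∈ s.support, (if i = i0 then (1:R) else 0) ^ s i = 1 := by
      intro i hi
      have : i = i0 := by simpa using h hi
      simp [this]
    rw [Finset.prod_congr rfl this]
    simp
  · rw [if_neg h]
    obtain ⟨i, hi, hii0⟩ : ∃ i ∈ s.support, i ≠ i0 := by
      by_contra hc
      push_neg at hc
      exact h (fun i hi => by simpa using hc i hi)
    rw [Finsupp.prod]
    rw [Finset.prod_eq_zero hi (by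
      rw [if_neg hii0]
      exact zero_pow (Finsupp.mem_support_iff.mp hi))]
    simp

private theorem aux_decomp (p n : ℕ) (hn : 0 < n)
    (C : MvPolynomial (Fin n) (ZMod p)) (hC : C.IsHomogeneous 3)
    (hzero : MvPolynomial.eval (fun j => if j = (⟨0, hn⟩ : Fin n) then 1 else 0) C = 0)
    (hsing : ∀ j : Fin n,
      MvPolynomial.eval (fun l => if l = (⟨0, hn⟩ : Fin n) then 1 else 0)
        (MvPolynomial.pderiv j C) = 0) :
    (∃ Q T : MvPolynomial (Fin n) (ZMod p),
      Q.IsHomogeneous 2 ∧ T.IsHomogeneous 3 ∧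
      (⟨0, hn⟩ : Fin n) ∉ Q.vars ∧ (⟨0, hn⟩ : Fin n) ∉ T.vars ∧
      C = MvPolynomial.X (⟨0, hn⟩ : Fin n) * Q + T) := by
  classical
  set i0 : Fin n := ⟨0, hn⟩ with hi0
  have hdeg3 : ∀ m ∈ C.support, ∑ k, m k = 3 := by
    intro m hm
    rw [← aux_degree_eq_sum_univ]
    by_contra h
    exact MvPolynomial.mem_support_iff.mp hm (hC.coeff_eq_zero h)
  -- coefficient of X₀³ vanishes
  have hA : coeff (Finsupp.single i0 3) C = 0 := by
    have h1 : eval (fun j => if j = i0 then (1:ZMod p) else 0) C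
        = ∑ m ∈ C.support, if m = Finsupp.single i0 3 then coeff m C else 0 := by
      conv_lhs => rw [← support_sum_monomial_coeff C]
      rw [map_sum]
      refine Finset.sum_congr rfl fun m hm => ?_
      rw [aux_eval_e0_monomial]
      congr 1
      apply propext
      constructor
      · intro h
        have h2 := Finsupp.support_subset_singleton.mp h
        have h3 : m i0 = 3 := by
          have := hdeg3 m hm
          rw [h2] at this ⊢
          simpa [Finsupp.single_apply, Finset.sum_ite_eq'] using this
        rw [h2, h3]
      · intro h; rw [h]; exact Finsupp.support_single_subset
    rw [h1, Finset.sum_ite_eq' C.support (Finsupp.single i0 3) (fun m => coeff m C)] at hzero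
    by_cases hmem : Finsupp.single i0 3 ∈ C.support
    · rwa [if_pos hmem] at hzero
    · exact MvPolynomial.notMem_support_iff.mp hmem
  -- coefficients of X₀²Xⱼ vanish
  have hB : ∀ j : Fin n, j ≠ i0 →
      coeff (Finsupp.single i0 2 + Finsupp.single j 1) C = 0 := by
    intro j hj
    have hder : pderiv j C
        = ∑ m ∈ C.support, monomial (m - Finsupp.single j 1) (coeff m C * m j) := by
      conv_lhs => rw [← support_sum_monomial_coeff C]
      rw [map_sum]
      exact Finset.sum_congr rfl fun m _ => pderiv_monomial
    have h1 := hsing j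
    rw [hder, map_sum] at h1
    have h2 : ∀ m ∈ C.support,
        eval (fun l => if l = i0 then (1:ZMod p) else 0)
          (monomial (m - Finsupp.single j 1) (coeff m C * m j))
        = if m = Finsupp.single i0 2 + Finsupp.single j 1 then coeff m C * m j else 0 := by
      intro m hm
      rw [aux_eval_e0_monomial]
      by_cases hmeq : m = Finsupp.single i0 2 + Finsupp.single j 1
      · rw [if_pos hmeq, if_pos]
        subst hmeq
        rw [add_tsub_cancel_right]
        exact Finsupp.support_single_subset
      · rw [if_neg hmeq]
        by_cases hc : (m - Finsupp.single j 1).support ⊆ {i0}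
        · rw [if_pos hc]
          suffices hmj : m j = 0 by rw [hmj]; simp
          by_contra hmj
          apply hmeq
          have hval : ∀ i : Fin n, i ≠ i0 → (m - Finsupp.single j 1 : Fin n →₀ ℕ) i = 0 := by
            intro i hi
            by_contra hii
            have : i ∈ (m - Finsupp.single j 1).support := Finsupp.mem_support_iff.mpr hii
            exact hi (by simpa using hc this)
          have hother : ∀ i, i ≠ i0 → i ≠ j → m i = 0 := by
            intro i hi hij
            have := hval i hi
            rwa [Finsupp.tsub_apply, Finsupp.single_apply, if_neg (Ne.symm hij),
              Nat.sub_zero] at this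
          have hmj1 : m j = 1 := by
            have := hval j hj
            rw [Finsupp.tsub_apply, Finsupp.single_apply, if_pos rfl] at this
            omega
          have hmi0 : m i0 = 2 := by
            have hsum := hdeg3 m hm
            have e1 : ∑ k, m k = m i0 + ∑ k ∈ univ.erase i0, m k :=
              (Finset.add_sum_erase univ m (mem_univ i0)).symm
            have e2 : ∑ k ∈ univ.erase i0, m k
                = m j + ∑ k ∈ (univ.erase i0).erase j, m k :=
              (Finset.add_sum_erase _ m (by simp [hj])).symm
            have e3 : ∑ k ∈ (univ.erase i0).erase j, m k = 0 := by
              apply Finset.sum_eq_zero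
              intro k hk
              simp only [mem_erase] at hk
              exact hother k hk.2.1 hk.1
            omega
          ext i
          by_cases hii0 : i = i0
          · subst hii0
            simp [Finsupp.single_apply, hj, Ne.symm hj, hmi0]
          · by_cases hij : i = j
            · subst hij
              simp [Finsupp.single_apply, hii0, Ne.symm hii0, hj, Ne.symm hj, hmj1]
            · simp [Finsupp.single_apply, hii0, Ne.symm hii0, hij, Ne.symm hij, hother i hii0 hij]
        · rw [if_neg hc]
    rw [Finset.sum_congr rfl h2,
      Finset.sum_ite_eq' C.support _ (fun m => coeff m C * m j)] at h1
    by_cases hmem : Finsupp.single i0 2 + Finsupp.single j 1 ∈ C.support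
    · rw [if_pos hmem] at h1
      have hval : (Finsupp.single i0 2 + Finsupp.single j 1 : Fin n →₀ ℕ) j = 1 := by
        simp [Finsupp.single_apply, Ne.symm hj]
      rw [hval] at h1
      simpa using h1
    · exact MvPolynomial.notMem_support_iff.mp hmem
  -- every monomial has X₀-degree ≤ 1
  have hsupp : ∀ m ∈ C.support, m i0 ≤ 1 := by
    intro m hm
    by_contra hge
    push_neg at hge
    have hsum := hdeg3 m hm
    have hle3 : m i0 ≤ 3 := by
      rw [← hsum]
      exact Finset.single_le_sum (fun k _ => Nat.zero_le _) (mem_univ i0)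
    have pairle : ∀ j, j ≠ i0 → m i0 + m j ≤ 3 := by
      intro j hj
      rw [← hsum]
      have : ∑ k ∈ ({i0, j} : Finset (Fin n)), m k ≤ ∑ k, m k :=
        Finset.sum_le_sum_of_subset (subset_univ _)
      rwa [Finset.sum_pair (Ne.symm hj)] at this
    interval_cases hmi0 : m i0
    · -- m i0 = 2
      obtain ⟨j, hj, hmj⟩ : ∃ j, j ≠ i0 ∧ m j ≠ 0 := by
        by_contra hcon
        push_neg at hcon
        have : ∑ k, m k = m i0 := by
          rw [← Finset.add_sum_erase univ m (mem_univ i0)]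
          have : ∑ k ∈ univ.erase i0, m k = 0 :=
            Finset.sum_eq_zero fun k hk => hcon k (by simpa using (mem_erase.mp hk).1)
          omega
        omega
      have hmj1 : m j = 1 := by have := pairle j hj; omega
      have hother : ∀ k, k ≠ i0 → k ≠ j → m k = 0 := by
        intro k hk hkj
        have : ∑ x ∈ ({i0, j, k} : Finset (Fin n)), m x ≤ ∑ x, m x :=
          Finset.sum_le_sum_of_subset (subset_univ _)
        rw [Finset.sum_insert (by simp [Ne.symm hj, Ne.symm hk]),
          Finset.sum_pair (Ne.symm hkj)] at this
        omega
      have : m = Finsupp.single i0 2 + Finsupp.single j 1 := by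
        ext i
        by_cases hii0 : i = i0
        · subst hii0; simp [Finsupp.single_apply, hj, Ne.symm hj, hmi0]
        · by_cases hij : i = j
          · subst hij; simp [Finsupp.single_apply, hii0, Ne.symm hii0, hj, Ne.symm hj, hmj1]
          · simp [Finsupp.single_apply, hii0, Ne.symm hii0, hij, Ne.symm hij, hother i hii0 hij]
      exact MvPolynomial.mem_support_iff.mp hm (this ▸ hB j hj)
    · -- m i0 = 3
      have hother : ∀ k, k ≠ i0 → m k = 0 := by
        intro k hk
        have := pairle k hk
        omega
      have : m = Finsupp.single i0 3 := by
        ext i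
        by_cases hii0 : i = i0
        · subst hii0; simp [Finsupp.single_apply, hmi0]
        · simp [Finsupp.single_apply, hii0, Ne.symm hii0, hother i hii0]
      exact MvPolynomial.mem_support_iff.mp hm (this ▸ hA)
  -- construct Q and T
  set T : MvPolynomial (Fin n) (ZMod p) :=
    ∑ m ∈ C.support.filter (fun m => m i0 = 0), monomial m (coeff m C) with hTdef
  set Q : MvPolynomial (Fin n) (ZMod p) :=
    ∑ m ∈ C.support.filter (fun m => ¬ m i0 = 0),
      monomial (m - Finsupp.single i0 1) (coeff m C) with hQdef
  have hone : ∀ m ∈ C.support.filter (fun m => ¬ m i0 = 0), m i0 = 1 := by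
    intro m hm
    rw [mem_filter] at hm
    have := hsupp m hm.1
    omega
  refine ⟨Q, T, ?_, ?_, ?_, ?_, ?_⟩
  · -- Q homogeneous of degree 2
    apply IsHomogeneous.sum
    intro m hm
    apply isHomogeneous_monomial
    have h1 := hone m hm
    rw [mem_filter] at hm
    have h2 := hdeg3 m hm.1
    rw [aux_degree_eq_sum_univ]
    have e1 : ∑ k, (m - Finsupp.single i0 1 : Fin n →₀ ℕ) k
        = (m - Finsupp.single i0 1 : Fin n →₀ ℕ) i0
          + ∑ k ∈ univ.erase i0, (m - Finsupp.single i0 1 : Fin n →₀ ℕ) k :=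
      (Finset.add_sum_erase univ _ (mem_univ i0)).symm
    have e2 : ∑ k ∈ univ.erase i0, (m - Finsupp.single i0 1 : Fin n →₀ ℕ) k
        = ∑ k ∈ univ.erase i0, m k := by
      apply Finset.sum_congr rfl
      intro k hk
      rw [Finsupp.tsub_apply, Finsupp.single_apply, if_neg (Ne.symm (mem_erase.mp hk).1),
        Nat.sub_zero]
    have e3 : ∑ k, m k = m i0 + ∑ k ∈ univ.erase i0, m k :=
      (Finset.add_sum_erase univ _ (mem_univ i0)).symm
    have e4 : (m - Finsupp.single i0 1 : Fin n →₀ ℕ) i0 = 0 := by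
      rw [Finsupp.tsub_apply, Finsupp.single_apply, if_pos rfl, h1]
    omega
  · -- T homogeneous of degree 3
    apply IsHomogeneous.sum
    intro m hm
    rw [mem_filter] at hm
    exact isHomogeneous_monomial _ ((aux_degree_eq_sum_univ m).trans (hdeg3 m hm.1))
  · -- i0 ∉ Q.vars
    intro hv
    obtain ⟨m', hm'suppQ, hm'i0⟩ := (mem_vars i0).mp hv
    have hm'c : coeff m' Q ≠ 0 := MvPolynomial.mem_support_iff.mp hm'suppQ
    apply hm'c
    rw [hQdef, MvPolynomial.coeff_sum]
    apply Finset.sum_eq_zero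
    intro m hm
    rw [MvPolynomial.coeff_monomial]
    rw [if_neg]
    intro heq
    have : m' i0 = 0 := by
      rw [← heq, Finsupp.tsub_apply, Finsupp.single_apply, if_pos rfl, hone m hm]
    exact Finsupp.mem_support_iff.mp hm'i0 this
  · -- i0 ∉ T.vars
    intro hv
    obtain ⟨m', hm'supp, hm'i0⟩ := (mem_vars i0).mp hv
    have hm'c : coeff m' T ≠ 0 := MvPolynomial.mem_support_iff.mp hm'supp
    apply hm'c
    rw [hTdef, MvPolynomial.coeff_sum]
    apply Finset.sum_eq_zero
    intro m hm
    rw [mem_filter] at hm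
    rw [MvPolynomial.coeff_monomial]
    rw [if_neg]
    intro heq
    exact Finsupp.mem_support_iff.mp hm'i0 (heq ▸ hm.2)
  · -- C = X i0 * Q + T
    have hXQ : X i0 * Q = ∑ m ∈ C.support.filter (fun m => ¬ m i0 = 0),
        monomial m (coeff m C) := by
      rw [hQdef, Finset.mul_sum]
      apply Finset.sum_congr rfl
      intro m hm
      have hidx : Finsupp.single i0 1 + (m - Finsupp.single i0 1) = m := by
        ext k
        rw [Finsupp.add_apply, Finsupp.tsub_apply]
        by_cases hk : k = i0
        · subst hk
          rw [Finsupp.single_apply, if_pos rfl, hone m hm]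
        · simp only [Finsupp.single_apply, if_neg (fun h : i0 = k => hk h.symm)]
          omega
      rw [MvPolynomial.X, MvPolynomial.monomial_mul, hidx, one_mul]
    rw [hXQ, hTdef, add_comm,
      Finset.sum_filter_add_sum_filter_not C.support (fun m => m i0 = 0)
        (fun m => monomial m (coeff m C))]
    exact (support_sum_monomial_coeff C).symm

/-- A cubic form over `𝔽_p` is degenerate if some invertible linear substitution takes
it to a form in fewer variables. -/
def IsDegenerateCubic (p n : ℕ) (C : MvPolynomial (Fin n) (ZMod p)) : Prop :=
  ∃ M : Matrix (Fin n) (Fin n) (ZMod p), IsUnit M.det ∧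
    ∃ j : Fin n,
      j ∉ (MvPolynomial.bind₁
        (fun i => ∑ k, MvPolynomial.C (M i k) * MvPolynomial.X k) C).vars

/-- If a cubic form `C` over `𝔽_p` has a singular zero at `e₁`, then
`C = X₁·Q(X₂,…,Xₙ) + C̃(X₂,…,Xₙ)`; if moreover `C` is non-degenerate then it has at
least `p^{n-1} - 2p^{n-2}` non-singular zeros. -/
theorem stmt_5 (p n : ℕ) (hp : p.Prime) (hn : 0 < n)
    (C : MvPolynomial (Fin n) (ZMod p)) (hC : C.IsHomogeneous 3)
    (hzero : MvPolynomial.eval (fun j => if j = (⟨0, hn⟩ : Fin n) then 1 else 0) C = 0)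
    (hsing : ∀ j : Fin n,
      MvPolynomial.eval (fun l => if l = (⟨0, hn⟩ : Fin n) then 1 else 0)
        (MvPolynomial.pderiv j C) = 0) :
    (∃ Q T : MvPolynomial (Fin n) (ZMod p),
      Q.IsHomogeneous 2 ∧ T.IsHomogeneous 3 ∧
      (⟨0, hn⟩ : Fin n) ∉ Q.vars ∧ (⟨0, hn⟩ : Fin n) ∉ T.vars ∧
      C = MvPolynomial.X (⟨0, hn⟩ : Fin n) * Q + T) ∧
    (¬ IsDegenerateCubic p n C →
      (p : ℤ) ^ (n - 1) - 2 * (p : ℤ) ^ (n - 2)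
        ≤ (Nat.card {x : Fin n → ZMod p | MvPolynomial.eval x C = 0 ∧
            ∃ j, MvPolynomial.eval x (MvPolynomial.pderiv j C) ≠ 0} : ℤ)) := by
  obtain ⟨Q, T, hQ2, hT3, hQv, hTv, hCeq⟩ := aux_decomp p n hn C hC hzero hsing
  refine ⟨⟨Q, T, hQ2, hT3, hQv, hTv, hCeq⟩, ?_⟩
  intro hnd
  haveI : NeZero p := ⟨hp.ne_zero⟩
  -- Q is nonzero by nondegeneracy
  have hQ0 : Q ≠ 0 := by
    intro h0
    apply hnd
    refine ⟨1, by simp, ⟨0, hn⟩, ?_⟩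
    have hsub : (fun i : Fin n => ∑ k, MvPolynomial.C
        ((1 : Matrix (Fin n) (Fin n) (ZMod p)) i k) * MvPolynomial.X k)
        = (X : Fin n → MvPolynomial (Fin n) (ZMod p)) := by
      funext i
      rw [Finset.sum_eq_single i]
      · simp [Matrix.one_apply]
      · intro k _ hk
        simp [Matrix.one_apply, Ne.symm hk]
      · intro h
        simp at h
    rw [hsub, bind₁_X_left]
    have : C = T := by rw [hCeq, h0, mul_zero, zero_add]
    rw [AlgHom.id_apply, this]
    exact hTv
  classical
  haveI : Fact p.Prime := ⟨hp⟩
  set i0 : Fin n := ⟨0, hn⟩ with hi0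
  have hcard : Fintype.card (ZMod p) = p := ZMod.card p
  -- n ≥ 2
  have hn2 : 2 ≤ n := by
    by_contra hlt
    push_neg at hlt
    interval_cases n
    obtain ⟨m, hm⟩ := (MvPolynomial.support_nonempty).mpr hQ0
    have hmi0 : m i0 = 0 := by
      by_contra hne
      exact hQv ((mem_vars i0).mpr ⟨m, hm, Finsupp.mem_support_iff.mpr hne⟩)
    have hdeg : m.degree = 2 := by
      by_contra hne
      exact MvPolynomial.mem_support_iff.mp hm (hQ2.coeff_eq_zero hne)
    have : m = 0 := by
      apply Finsupp.ext
      intro k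
      have hk : k = i0 := by
        apply Fin.ext
        omega
      rw [hk, hmi0]; rfl
    rw [this] at hdeg
    simp [map_zero] at hdeg
  -- partial derivative
  have hpd : pderiv i0 C = Q := by
    rw [hCeq, map_add, pderiv_mul, pderiv_X_self, one_mul,
      pderiv_eq_zero_of_notMem_vars hQv, pderiv_eq_zero_of_notMem_vars hTv,
      mul_zero, add_zero, add_zero]
  -- finsets
  set B : Finset (Fin n → ZMod p) := univ.filter (fun x => x i0 = 0) with hB
  set Z : Finset (Fin n → ZMod p) :=
    univ.filter (fun x => x i0 = 0 ∧ eval x Q = 0) with hZ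
  set A : Finset (Fin n → ZMod p) :=
    univ.filter (fun x => x i0 = 0 ∧ ¬ eval x Q = 0)  with hA
  -- cardinality of B
  have hBcard : p * B.card = p ^ n := by
    have h1 := aux_card_slice i0 (fun _ : Fin n → ZMod p => True) (by intro x c; simp)
    simp only [Finset.filter_true, and_true, Finset.card_univ, Fintype.card_fun,
      Fintype.card_fin, hcard] at h1
    rw [hB, ← h1]
  -- bound on Z
  have hZbound : Z.card * p ^ 2 ≤ 2 * p ^ n := by
    have h1 := aux_card_slice i0 (fun x : Fin n → ZMod p => eval x Q = 0)
      (by intro x c; rw [aux_eval_update_eq hQv])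
    have h2 := aux_sz (ZMod p) n Q hQ0
    rw [hQ2.totalDegree hQ0, hcard, h1, ← hZ, hcard] at h2
    calc Z.card * p ^ 2 = p * Z.card * p := by ring
      _ ≤ 2 * p ^ n := h2
  -- Z.card + A.card = B.card
  have hsplit : Z.card + A.card = B.card := by
    rw [hZ, hA, hB, ← Finset.filter_filter, ← Finset.filter_filter]
    exact Finset.card_filter_add_card_filter_not _
  -- injection from A into nonsingular zeros
  set S : Finset (Fin n → ZMod p) := univ.filter (fun x => eval x C = 0 ∧
    ∃ j, eval x (pderiv j C) ≠ 0) with hS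
  have hinj : A.card ≤ S.card := by
    apply Finset.card_le_card_of_injOn
      (fun x => Function.update x i0 (- eval x T / eval x Q))
    · intro x hx
      rw [hA, Finset.mem_coe, mem_filter] at hx
      obtain ⟨-, hx0, hxQ⟩ := hx
      rw [hS, Finset.mem_coe, mem_filter]
      dsimp only
      refine ⟨mem_univ _, ?_, ⟨i0, ?_⟩⟩
      · rw [hCeq, map_add, map_mul, eval_X, aux_eval_update_eq hQv, aux_eval_update_eq hTv,
          Function.update_self, neg_div, neg_mul, div_mul_cancel₀ _ hxQ, neg_add_cancel]
      · rw [hpd, aux_eval_update_eq hQv]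
        exact hxQ
    · intro x hx y hy hxy
      rw [coe_filter] at hx hy
      simp only [Set.mem_setOf_eq] at hx hy
      funext k
      by_cases hk : k = i0
      · subst hk; rw [hx.2.1, hy.2.1]
      · have h5 := congrFun hxy k
        simp only [Function.update_of_ne hk] at h5
        exact h5
  -- Nat.card rewriting
  have hNat : (Nat.card {x : Fin n → ZMod p | MvPolynomial.eval x C = 0 ∧
      ∃ j, MvPolynomial.eval x (MvPolynomial.pderiv j C) ≠ 0}) = S.card := by
    rw [Nat.card_eq_fintype_card]
    rw [hS]
    convert Fintype.card_subtype (fun x : Fin n → ZMod p => eval x C = 0 ∧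
      ∃ j, eval x (pderiv j C) ≠ 0) using 1
    exact Fintype.card_congr (Equiv.refl _)
  -- final arithmetic
  rw [hNat]
  have hppos : 0 < p := hp.pos
  have e1 : p ^ n = p ^ (n - 2) * p ^ 2 := by
    rw [← pow_add]
    congr 1
    omega
  have hZle : Z.card ≤ 2 * p ^ (n - 2) := by
    rw [e1, ← mul_assoc] at hZbound
    exact Nat.le_of_mul_le_mul_right hZbound (by positivity)
  have hBeq : B.card = p ^ (n - 1) := by
    have e2 : p ^ n = p * p ^ (n - 1) := by
      rw [← pow_succ']
      congr 1
      omega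
    rw [e2] at hBcard
    exact Nat.eq_of_mul_eq_mul_left hppos hBcard
  have : (A.card : ℤ) ≤ S.card := by exact_mod_cast hinj
  have h2 : (Z.card : ℤ) + A.card = B.card := by exact_mod_cast hsplit
  have h3 : (Z.card : ℤ) ≤ 2 * p ^ (n - 2) := by exact_mod_cast hZle
  have h4 : (B.card : ℤ) = p ^ (n - 1) := by exact_mod_cast hBeq
  linarith
end

section
/- Let p be a prime, h < n, and let C ∈ 𝔽_p[X_1,…,X_n] be a cubic form depending only on X_1,…,X_h such that C, viewed as a form in h variables, has no non-trivial zero over 𝔽_p. Then every zero x ∈ 𝔽_p^n of C satisfies x_1 = … = x_h = 0, and hence for every k ≥ 1, ρ(p^k) = p^{(n-h)} · ρ̃(p^{k-1}), where ρ̃ counts zeros modulo p^{k-1} of the cubic form C̃(X) = p^{-1} C(pX_1,…,pX_h, X_{h+1},…,X_n). -/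
open MvPolynomial

private lemma card_subtype_ge (n h : ℕ) (hhn : h ≤ n) :
    Nat.card {j : Fin n // h ≤ (j : ℕ)} = n - h := by
  have e : Fin (n - h) ≃ {j : Fin n // h ≤ (j : ℕ)} :=
    { toFun := fun i => ⟨⟨h + i.1, by omega⟩, by simp⟩
      invFun := fun j => ⟨j.1.1 - h, by have := j.1.2; have := j.2; omega⟩
      left_inv := fun i => by ext; simp
      right_inv := fun j => by
        have := j.2
        ext
        simp [Nat.add_sub_cancel' this] }
  rw [← Nat.card_congr e, Nat.card_eq_fintype_card, Fintype.card_fin]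

/-- If `C` mod `p` depends only on `X_1, …, X_h` and this `h`-variable cubic form has
no non-trivial zero over `𝔽_p`, then every zero of `C` mod `p` has its first `h`
coordinates zero, and `ρ(p^k) = p^{n-h} · ρ̃(p^{k-1})` where `ρ̃` counts zeros of
`C̃(X) = p⁻¹ C(pX_1, …, pX_h, X_{h+1}, …, X_n)`. -/
theorem stmt_8 (p n h k : ℕ) (hp : p.Prime) (hhn : h < n) (hk : 1 ≤ k)
    (C : MvPolynomial (Fin n) ℤ) (hC : C.IsHomogeneous 3)
    (hvars : ∀ j ∈ (C.map (Int.castRingHom (ZMod p))).vars, (j : ℕ) < h)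
    (hnozero : ∀ y : Fin n → ZMod p, (∀ j : Fin n, h ≤ (j : ℕ) → y j = 0) →
      MvPolynomial.eval y (C.map (Int.castRingHom (ZMod p))) = 0 → y = 0)
    (D : MvPolynomial (Fin n) ℤ)
    (hD : MvPolynomial.C (p : ℤ) * D =
      MvPolynomial.bind₁ (fun j : Fin n =>
        if (j : ℕ) < h then MvPolynomial.C (p : ℤ) * MvPolynomial.X j
        else MvPolynomial.X j) C) :
    (∀ x : Fin n → ZMod p,
      MvPolynomial.eval x (C.map (Int.castRingHom (ZMod p))) = 0 →
      ∀ j : Fin n, (j : ℕ) < h → x j = 0) ∧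
    Nat.card {x : Fin n → ZMod (p ^ k) |
        MvPolynomial.eval x (C.map (Int.castRingHom (ZMod (p ^ k)))) = 0}
      = p ^ (n - h) *
        Nat.card {x : Fin n → ZMod (p ^ (k - 1)) |
          MvPolynomial.eval x (D.map (Int.castRingHom (ZMod (p ^ (k - 1))))) = 0} := by
  have hp0 : 0 < p := hp.pos
  have hp1 : 1 < p := hp.one_lt
  -- Part 1
  have part1 : ∀ x : Fin n → ZMod p,
      MvPolynomial.eval x (C.map (Int.castRingHom (ZMod p))) = 0 →
      ∀ j : Fin n, (j : ℕ) < h → x j = 0 := by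
    intro x hx j hj
    set Q := C.map (Int.castRingHom (ZMod p)) with hQ
    set y : Fin n → ZMod p := fun i => if (i : ℕ) < h then x i else 0 with hy
    have hyx : MvPolynomial.eval y Q = MvPolynomial.eval x Q := by
      show eval₂Hom (RingHom.id _) y Q = eval₂Hom (RingHom.id _) x Q
      refine eval₂Hom_congr' rfl (fun i hi _ => ?_) rfl
      simp [hy, hvars i hi]
    have h0 : y = 0 := by
      refine hnozero y (fun i hi => by simp [hy, Nat.not_lt.mpr hi]) (hyx.trans hx)
    have := congrFun h0 j
    simpa [hy, hj] using this
  refine ⟨part1, ?_⟩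
  -- Part 2
  set m := k - 1 with hm
  have hkm : k = m + 1 := by omega
  have hM0 : 0 < p ^ m := Nat.pow_pos hp0
  have hN0 : 0 < p ^ k := Nat.pow_pos hp0
  haveI : NeZero (p ^ k) := ⟨hN0.ne'⟩
  haveI : NeZero (p ^ m) := ⟨hM0.ne'⟩
  haveI : NeZero p := ⟨hp0.ne'⟩
  have hdvd : p ^ m ∣ p ^ k := pow_dvd_pow p (by omega)
  have hdvd1 : p ∣ p ^ k := dvd_pow_self p (by omega)
  set φN := Int.castRingHom (ZMod (p ^ k)) with hφN
  set φM := Int.castRingHom (ZMod (p ^ m)) with hφM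
  set φp := Int.castRingHom (ZMod p) with hφp
  set π : ZMod (p ^ k) →+* ZMod (p ^ m) := ZMod.castHom hdvd (ZMod (p ^ m)) with hπ
  set π1 : ZMod (p ^ k) →+* ZMod p := ZMod.castHom hdvd1 (ZMod p) with hπ1
  -- reduction commutes with evaluation
  have evalred : ∀ (x : Fin n → ZMod (p ^ k)) (E : MvPolynomial (Fin n) ℤ),
      π (MvPolynomial.eval x (E.map φN)) = MvPolynomial.eval (fun j => π (x j)) (E.map φM) := by
    intro x E
    rw [eval_map, eval_map, eval₂_comp_left π φN x E]
    congr 1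
    exact RingHom.ext_int _ _
  have evalred1 : ∀ (x : Fin n → ZMod (p ^ k)) (E : MvPolynomial (Fin n) ℤ),
      π1 (MvPolynomial.eval x (E.map φN)) = MvPolynomial.eval (fun j => π1 (x j)) (E.map φp) := by
    intro x E
    rw [eval_map, eval_map, eval₂_comp_left π1 φN x E]
    congr 1
    exact RingHom.ext_int _ _
  -- the map Φ
  set J := {j : Fin n // h ≤ (j : ℕ)} with hJ
  set Φ : (Fin n → ZMod (p ^ m)) × (J → ZMod p) → (Fin n → ZMod (p ^ k)) :=
    fun yc j => if hj : (j : ℕ) < h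
      then (p : ZMod (p ^ k)) * ((yc.1 j).val : ZMod (p ^ k))
      else ((((yc.1 j).val + p ^ m * (yc.2 ⟨j, Nat.le_of_not_lt hj⟩).val : ℕ)) : ZMod (p ^ k))
    with hΦ
  -- the key identity : eval (Φ yc) C_N = p * eval w D_N with π ∘ w related to y
  have key : ∀ yc : (Fin n → ZMod (p ^ m)) × (J → ZMod p),
      MvPolynomial.eval (Φ yc) (C.map φN) = 0 ↔
      MvPolynomial.eval yc.1 (D.map φM) = 0 := by
    rintro ⟨y, c⟩
    set w : Fin n → ZMod (p ^ k) := fun j => if hj : (j : ℕ) < h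
      then ((y j).val : ZMod (p ^ k))
      else Φ (y, c) j with hw
    have hmap : (MvPolynomial.C (p : ℤ) * D).map φN =
        (MvPolynomial.bind₁ (fun j : Fin n =>
          if (j : ℕ) < h then MvPolynomial.C (p : ℤ) * MvPolynomial.X j
          else MvPolynomial.X j) C).map φN := by rw [hD]
    rw [_root_.map_mul, map_bind₁] at hmap
    have hev := congrArg (MvPolynomial.eval w) hmap
    have evalbind : ∀ (g : Fin n → MvPolynomial (Fin n) (ZMod (p ^ k)))
        (E : MvPolynomial (Fin n) (ZMod (p ^ k))),
        MvPolynomial.eval w (MvPolynomial.bind₁ g E)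
          = MvPolynomial.eval (fun i => MvPolynomial.eval w (g i)) E :=
      fun g E => eval₂Hom_bind₁ _ _ _ _
    rw [_root_.map_mul, MvPolynomial.map_C, eval_C, evalbind] at hev
    have hΦeq : (fun i => MvPolynomial.eval w
        ((fun j : Fin n => if (j : ℕ) < h then MvPolynomial.C (p : ℤ) * MvPolynomial.X j
          else MvPolynomial.X j) i |>.map φN)) = Φ (y, c) := by
      funext i
      by_cases hi : (i : ℕ) < h
      · simp [hi, hw, hΦ, hφN]
      · simp [hi, hw]
    have hev2 : (φN (p : ℤ)) * MvPolynomial.eval w (D.map φN) =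
        MvPolynomial.eval (Φ (y, c)) (C.map φN) := by
      rw [← hΦeq]
      exact hev
    have hφNp : φN (p : ℤ) = ((p : ℕ) : ZMod (p ^ k)) := by simp [hφN]
    -- π ∘ w = y
    have hπw : (fun j => π (w j)) = y := by
      funext j
      by_cases hj : (j : ℕ) < h
      · simp [hw, hj, hπ, ZMod.natCast_val]
      · simp only [hw, hΦ, dif_neg hj]
        rw [map_natCast, Nat.cast_add, Nat.cast_mul, ZMod.natCast_self, zero_mul,
          add_zero, ZMod.natCast_val, ZMod.cast_id]
    have hπD : π (MvPolynomial.eval w (D.map φN)) = MvPolynomial.eval y (D.map φM) := by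
      rw [evalred, hπw]
    -- p * a = 0 ↔ π a = 0
    set a := MvPolynomial.eval w (D.map φN) with ha
    have hiff : (p : ZMod (p ^ k)) * a = 0 ↔ π a = 0 := by
      have hva : ((a.val : ℕ) : ZMod (p ^ k)) = a := by simp [ZMod.natCast_val]
      constructor
      · intro hpa
        have : ((p * a.val : ℕ) : ZMod (p ^ k)) = 0 := by push_cast [hva]; exact hpa
        rw [ZMod.natCast_eq_zero_iff] at this
        have this2 : p * p ^ m ∣ p * a.val := by
          rw [show p * p ^ m = p ^ k from by rw [hkm, pow_succ']]
          exact this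
        have hd : p ^ m ∣ a.val := (mul_dvd_mul_iff_left (show (p:ℕ) ≠ 0 from hp0.ne')).mp this2
        have : ((a.val : ℕ) : ZMod (p ^ m)) = 0 := (ZMod.natCast_eq_zero_iff _ _).mpr hd
        rw [hπ] ; rw [← hva] ; simpa using this
      · intro hpa
        have : ((a.val : ℕ) : ZMod (p ^ m)) = 0 := by
          rw [hπ] at hpa; rw [← hva] at hpa; simpa using hpa
        rw [ZMod.natCast_eq_zero_iff] at this
        have hd : p ^ k ∣ p * a.val := by
          have := mul_dvd_mul_left p this
          rwa [show p * p ^ m = p ^ k from by rw [hkm, pow_succ']] at this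
        have : ((p * a.val : ℕ) : ZMod (p ^ k)) = 0 := (ZMod.natCast_eq_zero_iff _ _).mpr hd
        push_cast [hva] at this
        exact this
    rw [← hev2, hφNp, ← hπD] at *
    rw [hiff, hπD]
  -- value facts about Φ
  have hNsplit : p ^ k = p ^ m * p := by rw [hkm, pow_succ]
  have hval1 : ∀ (y : Fin n → ZMod (p ^ m)) (c : J → ZMod p) (j : Fin n),
      (j : ℕ) < h → (Φ (y, c) j).val = p * (y j).val := by
    intro y c j hj
    have hlt : p * (y j).val < p ^ k := by
      have := ZMod.val_lt (y j)
      calc p * (y j).val < p * p ^ m := by exact (Nat.mul_lt_mul_left hp0).mpr this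
      _ = p ^ k := by rw [hNsplit, Nat.mul_comm]
    simp only [hΦ, dif_pos hj]
    rw [show ((p : ZMod (p ^ k)) * ((y j).val : ZMod (p ^ k)))
        = ((p * (y j).val : ℕ) : ZMod (p ^ k)) by push_cast; ring]
    exact ZMod.val_cast_of_lt hlt
  have hval2 : ∀ (y : Fin n → ZMod (p ^ m)) (c : J → ZMod p) (j : Fin n) (hj : h ≤ (j : ℕ)),
      (Φ (y, c) j).val = (y j).val + p ^ m * (c ⟨j, hj⟩).val := by
    intro y c j hj
    have h1 := ZMod.val_lt (y j)
    have h2 := ZMod.val_lt (c ⟨j, hj⟩)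
    have hlt : (y j).val + p ^ m * (c ⟨j, hj⟩).val < p ^ k := by
      rw [hNsplit]
      calc (y j).val + p ^ m * (c ⟨j, hj⟩).val
          < p ^ m * (1 + (c ⟨j, hj⟩).val) := by
            rw [Nat.mul_add, Nat.mul_one]; omega
        _ ≤ p ^ m * p := Nat.mul_le_mul_left _ (by omega)
    simp only [hΦ, dif_neg (Nat.not_lt.mpr hj)]
    exact ZMod.val_cast_of_lt hlt
  -- bijection
  set T := {y : Fin n → ZMod (p ^ m) |
      MvPolynomial.eval y (D.map φM) = 0} with hT
  set S := {x : Fin n → ZMod (p ^ k) |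
      MvPolynomial.eval x (C.map φN) = 0} with hS
  have hbij : Function.Bijective (fun yc : T × (J → ZMod p) =>
      (⟨Φ (yc.1.1, yc.2), (key _).mpr yc.1.2⟩ : S)) := by
    constructor
    · rintro ⟨⟨y, hy⟩, c⟩ ⟨⟨y', hy'⟩, c'⟩ heq
      have heq' : Φ (y, c) = Φ (y', c') := congrArg Subtype.val heq
      have hyy : y = y' := by
        funext j
        apply ZMod.val_injective
        have hv := congrArg ZMod.val (congrFun heq' j)
        by_cases hj : (j : ℕ) < h
        · rw [hval1 y c j hj, hval1 y' c' j hj] at hv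
          exact Nat.eq_of_mul_eq_mul_left hp0 hv
        · have hj' : h ≤ (j : ℕ) := Nat.le_of_not_lt hj
          rw [hval2 y c j hj', hval2 y' c' j hj'] at hv
          have e1 : ((y j).val + p ^ m * (c ⟨j, hj'⟩).val) % p ^ m
              = ((y' j).val + p ^ m * (c' ⟨j, hj'⟩).val) % p ^ m := by rw [hv]
          rwa [Nat.mul_comm, Nat.add_mul_mod_self_left, Nat.mul_comm,
            Nat.add_mul_mod_self_left, Nat.mod_eq_of_lt (ZMod.val_lt _),
            Nat.mod_eq_of_lt (ZMod.val_lt _)] at e1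
      have hcc : c = c' := by
        funext jj
        obtain ⟨j, hj⟩ := jj
        apply ZMod.val_injective
        have hv := congrArg ZMod.val (congrFun heq' j)
        rw [hval2 y c j hj, hval2 y' c' j hj, hyy] at hv
        have := Nat.add_left_cancel hv
        exact Nat.eq_of_mul_eq_mul_left hM0 this
      simp only [Prod.mk.injEq, Subtype.mk.injEq]
      exact ⟨hyy, hcc⟩
    · rintro ⟨x, hx⟩
      -- x j divisible by p for j < h
      have hx0 : MvPolynomial.eval x (C.map φN) = 0 := hx
      have hdiv : ∀ j : Fin n, (j : ℕ) < h → p ∣ (x j).val := by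
        intro j hj
        have hred : MvPolynomial.eval (fun i => π1 (x i)) (C.map φp) = 0 := by
          rw [← evalred1, hx0, map_zero]
        have := part1 _ hred j hj
        have : (((x j).val : ℕ) : ZMod p) = 0 := by
          rw [ZMod.natCast_val, ← ZMod.castHom_apply (h := hdvd1)]
          exact this
        exact (ZMod.natCast_eq_zero_iff _ _).mp this
      set y : Fin n → ZMod (p ^ m) := fun j =>
        if (j : ℕ) < h then (((x j).val / p : ℕ) : ZMod (p ^ m))
        else (((x j).val : ℕ) : ZMod (p ^ m)) with hy
      set c : J → ZMod p := fun jj => (((x jj.1).val / p ^ m : ℕ) : ZMod p) with hc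
      have hΦx : Φ (y, c) = x := by
        funext j
        have hvlt : (x j).val < p ^ k := ZMod.val_lt (x j)
        have hvx : (((x j).val : ℕ) : ZMod (p ^ k)) = x j := by
          simp [ZMod.natCast_val]
        by_cases hj : (j : ℕ) < h
        · have hdvlt : (x j).val / p < p ^ m := by
            rw [Nat.div_lt_iff_lt_mul hp0, ← hNsplit]
            exact hvlt
          have hyval : (y j).val = (x j).val / p := by
            simp only [hy, if_pos hj]
            rw [ZMod.val_natCast, Nat.mod_eq_of_lt hdvlt]
          simp only [hΦ, dif_pos hj, hyval]
          rw [show ((p : ZMod (p ^ k)) * (((x j).val / p : ℕ) : ZMod (p ^ k)))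
              = ((p * ((x j).val / p) : ℕ) : ZMod (p ^ k)) by push_cast; ring]
          rw [Nat.mul_div_cancel' (hdiv j hj)]
          exact hvx
        · have hj' : h ≤ (j : ℕ) := Nat.le_of_not_lt hj
          have hyval : (y j).val = (x j).val % p ^ m := by
            simp only [hy, if_neg hj]
            exact ZMod.val_natCast _ _
          have hclt : (x j).val / p ^ m < p := by
            rw [Nat.div_lt_iff_lt_mul hM0]
            exact lt_of_lt_of_eq hvlt (by rw [hkm, pow_succ'])
          have hcval : (c ⟨j, hj'⟩).val = (x j).val / p ^ m := by
            simp only [hc]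
            rw [ZMod.val_natCast, Nat.mod_eq_of_lt hclt]
          simp only [hΦ, dif_neg hj, hyval, hcval]
          rw [Nat.mod_add_div]
          exact hvx
      have hyT : y ∈ T := by
        have := (key (y, c)).mp (by rw [hΦx]; exact hx0)
        exact this
      exact ⟨⟨⟨y, hyT⟩, c⟩, Subtype.ext hΦx⟩
  have hcard : Nat.card S = Nat.card (T × (J → ZMod p)) :=
    (Nat.card_eq_of_bijective _ hbij).symm
  rw [hcard, Nat.card_prod, Nat.card_eq_fintype_card (α := J → ZMod p), Fintype.card_fun]
  rw [ZMod.card, ← Nat.card_eq_fintype_card, card_subtype_ge n h (le_of_lt hhn)]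
  ring
end
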